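/- arXiv:1304.8126 — 3 statements merged into one kernel-verified Lean document; each statement's English description precedes it below -/
import Mathlib

section
/- Let X ∈ ℂ^{n1×n2} be the data matrix of the 2-D spectral model with r frequency pairs, and let X_e be its two-fold Hankel enhanced form with pencil parameters k1, k2. Then X_e admits the factorization X_e = √(k1·k2·(n1−k1+1)·(n2−k2+1)) · E_L · D · E_R, where D = diag(d_1,…,d_r), and consequently rank(X_e) ≤ r. -/
open scoped Classical
open Matrix

noncomputable section

namespace EMaC

/-- `e^{2π i f}` -/
def efreq (f : ℝ) : ℂ := Complex.exp (2 * Real.pi * Complex.I * (f : ℂ))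

/-- The data matrix of the 2-D spectral model:
`X_{k,l} = Σ_i d_i y_i^k z_i^l` with `y_i = e^{2πi f1 i}`, `z_i = e^{2πi f2 i}`. -/
def dataMatrix (n1 n2 r : ℕ) (d : Fin r → ℂ) (f1 f2 : Fin r → ℝ) :
    Matrix (Fin n1) (Fin n2) ℂ :=
  Matrix.of fun k l => ∑ i : Fin r, d i * efreq (f1 i) ^ (k : ℕ) * efreq (f2 i) ^ (l : ℕ)

/-- Frequencies lie in `[0,1)²` and the `r` frequency pairs are distinct. -/
structure SpectralModel (r : ℕ) (f1 f2 : Fin r → ℝ) : Prop where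
  f1_mem : ∀ i, f1 i ∈ Set.Ico (0 : ℝ) 1
  f2_mem : ∀ i, f2 i ∈ Set.Ico (0 : ℝ) 1
  distinct : Function.Injective fun i => (f1 i, f2 i)

/-- The two-fold Hankel enhanced form of an `n1 × n2` matrix, with pencil
parameters `k1, k2`. -/
def enhance {n1 n2 : ℕ} (k1 k2 : ℕ) (hk1 : k1 ≤ n1) (hk2 : k2 ≤ n2)
    (M : Matrix (Fin n1) (Fin n2) ℂ) :
    Matrix (Fin k1 × Fin k2) (Fin (n1 - k1 + 1) × Fin (n2 - k2 + 1)) ℂ :=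
  Matrix.of fun ip jq =>
    M ⟨ip.1.1 + jq.1.1, by have h1 := ip.1.isLt; have h2 := jq.1.isLt; omega⟩
      ⟨ip.2.1 + jq.2.1, by have h1 := ip.2.isLt; have h2 := jq.2.isLt; omega⟩

/-- The matrix `E_L`. -/
def EL (r k1 k2 : ℕ) (f1 f2 : Fin r → ℝ) : Matrix (Fin k1 × Fin k2) (Fin r) ℂ :=
  Matrix.of fun ip s =>
    efreq (f1 s) ^ (ip.1 : ℕ) * efreq (f2 s) ^ (ip.2 : ℕ) /
      (Real.sqrt ((k1 : ℝ) * k2) : ℂ)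

/-- The matrix `E_R`. -/
def ER (n1 n2 r k1 k2 : ℕ) (f1 f2 : Fin r → ℝ) :
    Matrix (Fin r) (Fin (n1 - k1 + 1) × Fin (n2 - k2 + 1)) ℂ :=
  Matrix.of fun s jq =>
    efreq (f1 s) ^ (jq.1 : ℕ) * efreq (f2 s) ^ (jq.2 : ℕ) /
      (Real.sqrt (((n1 - k1 + 1 : ℕ) : ℝ) * ((n2 - k2 + 1 : ℕ) : ℝ)) : ℂ)

/-- Smallest singular value of a square complex matrix. -/
def sigmaMin {n : Type*} [Fintype n] [DecidableEq n] (M : Matrix n n ℂ) : ℝ :=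
  ⨅ i, Real.sqrt ((Matrix.isHermitian_conjTranspose_mul_self M).eigenvalues i)

/-- The incoherence property with parameter `μ1`:
`σ_min(G_L) ≥ 1/μ1` and `σ_min(G_R) ≥ 1/μ1`, where `G_L = E_L* E_L` and
`G_R = (E_R E_R*)ᵀ`. -/
def Incoherent (n1 n2 r k1 k2 : ℕ) (f1 f2 : Fin r → ℝ) (μ1 : ℝ) : Prop :=
  1 / μ1 ≤ sigmaMin ((EL r k1 k2 f1 f2)ᴴ * EL r k1 k2 f1 f2) ∧
    1 / μ1 ≤ sigmaMin ((ER n1 n2 r k1 k2 f1 f2 * (ER n1 n2 r k1 k2 f1 f2)ᴴ)ᵀ)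

/-- `c_s = max{n1 n2/(k1 k2), n1 n2/((n1-k1+1)(n2-k2+1))}`. -/
def cs (n1 n2 k1 k2 : ℕ) : ℝ :=
  max (((n1 : ℝ) * n2) / ((k1 : ℝ) * k2))
    (((n1 : ℝ) * n2) / (((n1 - k1 + 1 : ℕ) : ℝ) * ((n2 - k2 + 1 : ℕ) : ℝ)))

/-- Nuclear norm: sum of singular values. -/
def nuclearNorm {p q : Type*} [Fintype p] [Fintype q] [DecidableEq q]
    (M : Matrix p q ℂ) : ℝ :=
  ∑ i, Real.sqrt ((Matrix.isHermitian_conjTranspose_mul_self M).eigenvalues i)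

/-- Spectral norm: largest singular value. -/
def specNorm {p q : Type*} [Fintype p] [Fintype q] [DecidableEq q]
    (M : Matrix p q ℂ) : ℝ :=
  ⨆ i, Real.sqrt ((Matrix.isHermitian_conjTranspose_mul_self M).eigenvalues i)

/-- Frobenius norm. -/
def frob {p q : Type*} [Fintype p] [Fintype q] (M : Matrix p q ℂ) : ℝ :=
  Real.sqrt (∑ i, ∑ j, ‖M i j‖ ^ 2)

/-- Frobenius inner product `⟨P,Q⟩ = Tr(P* Q)`. -/
def finner {p q : Type*} [Fintype p] [Fintype q] (P Q : Matrix p q ℂ) : ℂ :=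
  ∑ i, ∑ j, (starRingEnd ℂ) (P i j) * Q i j

/-- Elementwise ℓ1 norm. -/
def l1norm {p q : Type*} [Fintype p] [Fintype q] (M : Matrix p q ℂ) : ℝ :=
  ∑ i, ∑ j, ‖M i j‖

/-- `P_Ω`: keep entries on `Ω`, zero elsewhere. -/
def projOmega {n1 n2 : ℕ} (Ω : Finset (Fin n1 × Fin n2))
    (M : Matrix (Fin n1) (Fin n2) ℂ) : Matrix (Fin n1) (Fin n2) ℂ :=
  Matrix.of fun k l => if (k, l) ∈ Ω then M k l else 0

/-- `ω_{k,l} = |Ω_e(k,l)|`. -/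
def wcount (n1 n2 k1 k2 : ℕ) (a : Fin n1 × Fin n2) : ℕ :=
  (Finset.univ.filter fun e : (Fin k1 × Fin k2) × (Fin (n1 - k1 + 1) × Fin (n2 - k2 + 1)) =>
    e.1.1.1 + e.2.1.1 = (a.1 : ℕ) ∧ e.1.2.1 + e.2.2.1 = (a.2 : ℕ)).card

/-- The basis matrix `A_{(k,l)}`: `1/√ω_{k,l}` on `Ω_e(k,l)` and `0` elsewhere. -/
def Amat (n1 n2 k1 k2 : ℕ) (a : Fin n1 × Fin n2) :
    Matrix (Fin k1 × Fin k2) (Fin (n1 - k1 + 1) × Fin (n2 - k2 + 1)) ℂ :=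
  Matrix.of fun ip jq =>
    if ip.1.1 + jq.1.1 = (a.1 : ℕ) ∧ ip.2.1 + jq.2.1 = (a.2 : ℕ) then
      (((Real.sqrt (wcount n1 n2 k1 k2 a))⁻¹ : ℝ) : ℂ) else 0

/-- `A_a(M) = ⟨A_a, M⟩ A_a`. -/
def AopS (n1 n2 k1 k2 : ℕ) (a : Fin n1 × Fin n2)
    (M : Matrix (Fin k1 × Fin k2) (Fin (n1 - k1 + 1) × Fin (n2 - k2 + 1)) ℂ) :
    Matrix (Fin k1 × Fin k2) (Fin (n1 - k1 + 1) × Fin (n2 - k2 + 1)) ℂ :=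
  finner (Amat n1 n2 k1 k2 a) M • Amat n1 n2 k1 k2 a

/-- `A = Σ_{(k,l)} A_{(k,l)}`: the projection onto the span of the `A_{(k,l)}`. -/
def Aproj (n1 n2 k1 k2 : ℕ)
    (M : Matrix (Fin k1 × Fin k2) (Fin (n1 - k1 + 1) × Fin (n2 - k2 + 1)) ℂ) :
    Matrix (Fin k1 × Fin k2) (Fin (n1 - k1 + 1) × Fin (n2 - k2 + 1)) ℂ :=
  ∑ a : Fin n1 × Fin n2, AopS n1 n2 k1 k2 a M

/-- `Σ_{a ∈ s} A_a` over a (finite) set `s` of distinct indices. -/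
def AprojSet (n1 n2 k1 k2 : ℕ) (s : Finset (Fin n1 × Fin n2))
    (M : Matrix (Fin k1 × Fin k2) (Fin (n1 - k1 + 1) × Fin (n2 - k2 + 1)) ℂ) :
    Matrix (Fin k1 × Fin k2) (Fin (n1 - k1 + 1) × Fin (n2 - k2 + 1)) ℂ :=
  ∑ a ∈ s, AopS n1 n2 k1 k2 a M

/-- `A_Ω = Σ_{i} A_{a_i}` (with multiplicity) for a multiset of samples given
as a tuple `a : Fin m → Fin n1 × Fin n2`. -/
def AopTuple (n1 n2 k1 k2 m : ℕ) (a : Fin m → Fin n1 × Fin n2)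
    (M : Matrix (Fin k1 × Fin k2) (Fin (n1 - k1 + 1) × Fin (n2 - k2 + 1)) ℂ) :
    Matrix (Fin k1 × Fin k2) (Fin (n1 - k1 + 1) × Fin (n2 - k2 + 1)) ℂ :=
  ∑ i : Fin m, AopS n1 n2 k1 k2 (a i) M

/-- `P_T(M) = U U* M + M V V* − U U* M V V*`, the projection onto the
tangent space `T = {U M* + M̃ V*}`. -/
def projT {p q : Type*} [Fintype p] [Fintype q] {r' : ℕ}
    (U : Matrix p (Fin r') ℂ) (V : Matrix q (Fin r') ℂ) (M : Matrix p q ℂ) :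
    Matrix p q ℂ :=
  U * Uᴴ * M + M * (V * Vᴴ) - U * Uᴴ * M * (V * Vᴴ)

/-- `X_e = U Λ V*` is a compact SVD with positive singular values `σ`. -/
structure CompactSVD {p q : Type*} [Fintype p] [Fintype q] {r' : ℕ}
    (Xe : Matrix p q ℂ) (U : Matrix p (Fin r') ℂ) (σ : Fin r' → ℝ)
    (V : Matrix q (Fin r') ℂ) : Prop where
  U_orth : Uᴴ * U = 1
  V_orth : Vᴴ * V = 1
  sigma_pos : ∀ i, 0 < σ i
  decomp : Xe = U * Matrix.diagonal (fun i => ((σ i : ℝ) : ℂ)) * Vᴴ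

/-- `‖M‖_{A,2}²`. -/
def Anorm2sq (n1 n2 k1 k2 : ℕ)
    (M : Matrix (Fin k1 × Fin k2) (Fin (n1 - k1 + 1) × Fin (n2 - k2 + 1)) ℂ) : ℝ :=
  ∑ a : Fin n1 × Fin n2, ‖finner (Amat n1 n2 k1 k2 a) M‖ ^ 2 / (wcount n1 n2 k1 k2 a : ℝ)

/-- `‖M‖_{A,∞}`. -/
def AnormInf (n1 n2 k1 k2 : ℕ)
    (M : Matrix (Fin k1 × Fin k2) (Fin (n1 - k1 + 1) × Fin (n2 - k2 + 1)) ℂ) : ℝ :=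
  ⨆ a : Fin n1 × Fin n2,
    ‖finner (Amat n1 n2 k1 k2 a) M‖ / Real.sqrt (wcount n1 n2 k1 k2 a)

/-- Complex sign. -/
def csgn (z : ℂ) : ℂ := if z = 0 then 0 else z / (‖z‖ : ℂ)

/-- Entrywise complex sign of a matrix. -/
def matSgn {p q : Type*} (M : Matrix p q ℂ) : Matrix p q ℂ :=
  Matrix.of fun i j => csgn (M i j)

end EMaC

namespace EMaC

/-- The set of distinct sample locations of the sample tuple (multiset) `a`. -/
def sampleSet {n1 n2 m : ℕ} (a : Fin m → Fin n1 × Fin n2) : Finset (Fin n1 × Fin n2) :=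
  Finset.image a Finset.univ

/-- The set of distinct locations among the first `mclean` samples of `a`. -/
def cleanSet {n1 n2 m : ℕ} (mclean : ℕ) (a : Fin m → Fin n1 × Fin n2) :
    Finset (Fin n1 × Fin n2) :=
  Finset.image a (Finset.univ.filter fun i => (i : ℕ) < mclean)

/-- `Ω^dirty`: distinct locations of `a` not among the first `mclean` (clean) samples. -/
def dirtySet {n1 n2 m : ℕ} (mclean : ℕ) (a : Fin m → Fin n1 × Fin n2) :
    Finset (Fin n1 × Fin n2) :=
  sampleSet a \ cleanSet mclean a

/-- `A_{Ω^clean}` (with multiplicity): sum over the first `mclean` samples. -/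
def AopClean (n1 n2 k1 k2 m mclean : ℕ) (a : Fin m → Fin n1 × Fin n2)
    (M : Matrix (Fin k1 × Fin k2) (Fin (n1 - k1 + 1) × Fin (n2 - k2 + 1)) ℂ) :
    Matrix (Fin k1 × Fin k2) (Fin (n1 - k1 + 1) × Fin (n2 - k2 + 1)) ℂ :=
  ∑ i ∈ Finset.univ.filter (fun i : Fin m => (i : ℕ) < mclean), AopS n1 n2 k1 k2 (a i) M

/-- The Robust-EMaC objective `‖M_e‖_* + λ ‖Ŝ_e‖_1`. -/
def robustObj (n1 n2 k1 k2 : ℕ) (hk1' : k1 ≤ n1) (hk2' : k2 ≤ n2) (lam : ℝ)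
    (M S : Matrix (Fin n1) (Fin n2) ℂ) : ℝ :=
  nuclearNorm (enhance k1 k2 hk1' hk2' M) + lam * l1norm (enhance k1 k2 hk1' hk2' S)

/-- `(M̂, Ŝ)` is a minimizer of Robust-EMaC with observations `P_Ω(X + S)`. -/
def RobustMinimizer (n1 n2 k1 k2 : ℕ) (hk1' : k1 ≤ n1) (hk2' : k2 ≤ n2) (lam : ℝ)
    (Ω : Finset (Fin n1 × Fin n2)) (X S Mhat Shat : Matrix (Fin n1) (Fin n2) ℂ) : Prop :=
  projOmega Ω (Mhat + Shat) = projOmega Ω (X + S) ∧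
    ∀ M' S' : Matrix (Fin n1) (Fin n2) ℂ,
      projOmega Ω (M' + S') = projOmega Ω (X + S) →
      robustObj n1 n2 k1 k2 hk1' hk2' lam Mhat Shat ≤
        robustObj n1 n2 k1 k2 hk1' hk2' lam M' S'

/-- `X` is the unique solution of the EMaC program with observed entries `Ω`:
every feasible `M` is either `X` itself or has strictly larger enhanced
nuclear norm. -/
def UniqueEMaCSolution (n1 n2 k1 k2 : ℕ) (hk1' : k1 ≤ n1) (hk2' : k2 ≤ n2)
    (Ω : Finset (Fin n1 × Fin n2)) (X : Matrix (Fin n1) (Fin n2) ℂ) : Prop :=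
  ∀ M : Matrix (Fin n1) (Fin n2) ℂ,
    (∀ e ∈ Ω, M e.1 e.2 = X e.1 e.2) →
    M = X ∨
      nuclearNorm (enhance k1 k2 hk1' hk2' X) < nuclearNorm (enhance k1 k2 hk1' hk2' M)

/-- `sgn(S)` in the random-sign outlier model: the random sign `K` on `Ω^dirty`
and zero elsewhere. -/
def dirtySign {n1 n2 m : ℕ} (mclean : ℕ) (a : Fin m → Fin n1 × Fin n2)
    (K : Fin n1 × Fin n2 → ℂ) : Matrix (Fin n1) (Fin n2) ℂ :=
  Matrix.of fun α β => if (α, β) ∈ dirtySet mclean a then K (α, β) else 0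

end EMaC

open EMaC in
/-- the enhanced form of the 2-D spectral data matrix admits the
Vandermonde-type factorization
`X_e = √(k1 k2 (n1−k1+1)(n2−k2+1)) · E_L · D · E_R`, and hence has rank at
most `r`. -/
theorem enhanced_matrix_factorization_and_rank
    (n1 n2 r k1 k2 : ℕ) (hn1 : 0 < n1) (hn2 : 0 < n2) (hr : 0 < r)
    (hk1 : 1 ≤ k1) (hk1' : k1 ≤ n1) (hk2 : 1 ≤ k2) (hk2' : k2 ≤ n2)
    (d : Fin r → ℂ) (f1 f2 : Fin r → ℝ)
    (hmodel : SpectralModel r f1 f2) :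
    enhance k1 k2 hk1' hk2' (dataMatrix n1 n2 r d f1 f2) =
      (Real.sqrt (((k1 : ℝ) * k2) *
          (((n1 - k1 + 1 : ℕ) : ℝ) * ((n2 - k2 + 1 : ℕ) : ℝ))) : ℂ) •
        (EL r k1 k2 f1 f2 * Matrix.diagonal d * ER n1 n2 r k1 k2 f1 f2) ∧
    (enhance k1 k2 hk1' hk2' (dataMatrix n1 n2 r d f1 f2)).rank ≤ r := by
  have hs1 : (0:ℝ) < Real.sqrt ((k1 : ℝ) * k2) := by
    apply Real.sqrt_pos.2
    positivity
  have hs2 : (0:ℝ) < Real.sqrt (((n1 - k1 + 1 : ℕ) : ℝ) * ((n2 - k2 + 1 : ℕ) : ℝ)) := by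
    apply Real.sqrt_pos.2
    positivity
  have hsplit : Real.sqrt (((k1 : ℝ) * k2) *
      (((n1 - k1 + 1 : ℕ) : ℝ) * ((n2 - k2 + 1 : ℕ) : ℝ))) =
      Real.sqrt ((k1 : ℝ) * k2) * Real.sqrt (((n1 - k1 + 1 : ℕ) : ℝ) * ((n2 - k2 + 1 : ℕ) : ℝ)) := by
    rw [Real.sqrt_mul (by positivity)]
  have hfac : enhance k1 k2 hk1' hk2' (dataMatrix n1 n2 r d f1 f2) =
      (Real.sqrt (((k1 : ℝ) * k2) *
          (((n1 - k1 + 1 : ℕ) : ℝ) * ((n2 - k2 + 1 : ℕ) : ℝ))) : ℂ) •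
        (EL r k1 k2 f1 f2 * Matrix.diagonal d * ER n1 n2 r k1 k2 f1 f2) := by
    ext ip jq
    simp only [enhance, dataMatrix, EL, ER, Matrix.smul_apply, Matrix.of_apply,
      Matrix.mul_apply, Matrix.diagonal_apply, Finset.sum_mul, Finset.mul_sum,
      smul_eq_mul]
    refine Finset.sum_congr rfl fun s _ => ?_
    rw [Finset.sum_eq_single s (by intro b _ hb; simp [hb]) (by simp)]
    simp only [if_pos rfl]
    rw [hsplit]
    have h1 : (Real.sqrt ((k1 : ℝ) * k2) : ℂ) ≠ 0 := by
      exact_mod_cast hs1.ne'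
    have h2 : ((Real.sqrt (((n1 - k1 + 1 : ℕ) : ℝ) * ((n2 - k2 + 1 : ℕ) : ℝ))) : ℂ) ≠ 0 := by
      exact_mod_cast hs2.ne'
    rw [pow_add, pow_add, Complex.ofReal_mul]
    have key : ∀ (s1 s2 A B C D E : ℂ), s1 ≠ 0 → s2 ≠ 0 →
        s1 * s2 * ((A * C / s1 * D) * (B * E / s2)) = D * (A * B) * (C * E) := by
      intro s1 s2 A B C D E hs1' hs2'
      field_simp
    rw [key _ _ _ _ _ _ _ h1 h2]
    simp
  refine ⟨hfac, ?_⟩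
  rw [hfac]
  have hc : (Real.sqrt (((k1 : ℝ) * k2) *
      (((n1 - k1 + 1 : ℕ) : ℝ) * ((n2 - k2 + 1 : ℕ) : ℝ))) : ℂ) ≠ 0 := by
    rw [hsplit]
    push_cast
    exact mul_ne_zero (by exact_mod_cast hs1.ne') (by exact_mod_cast hs2.ne')
  rw [show ((Real.sqrt (((k1 : ℝ) * k2) *
      (((n1 - k1 + 1 : ℕ) : ℝ) * ((n2 - k2 + 1 : ℕ) : ℝ))) : ℂ) •
        (EL r k1 k2 f1 f2 * Matrix.diagonal d * ER n1 n2 r k1 k2 f1 f2)) =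
      ((Real.sqrt (((k1 : ℝ) * k2) *
      (((n1 - k1 + 1 : ℕ) : ℝ) * ((n2 - k2 + 1 : ℕ) : ℝ))) : ℂ) • EL r k1 k2 f1 f2) *
        (Matrix.diagonal d * ER n1 n2 r k1 k2 f1 f2) from by
    rw [Matrix.smul_mul, Matrix.mul_assoc]]
  refine le_trans (Matrix.rank_mul_le_left _ _) ?_
  simpa using Matrix.rank_le_card_width
    ((Real.sqrt (((k1 : ℝ) * k2) *
      (((n1 - k1 + 1 : ℕ) : ℝ) * ((n2 - k2 + 1 : ℕ) : ℝ))) : ℂ) • EL r k1 k2 f1 f2)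
end
end

section
/- (Lemma 2, first part.) Suppose X ∈ ℂ^{n1×n2} is the data matrix of the 2-D spectral model satisfying the incoherence property with parameter μ1, with enhanced form X_e = U Λ V* (compact SVD). Then for every (k,l) ∈ {0,…,n1−1}×{0,…,n2−1}: ‖U U* A_{(k,l)}‖_F^2 ≤ μ1·c_s·r/(n1 n2) and ‖A_{(k,l)} V V*‖_F^2 ≤ μ1·c_s·r/(n1 n2). -/
open scoped Classical
open Matrix

noncomputable section

namespace EMaCAux
open EMaC
open scoped ComplexOrder

variable {ι κ : Type*} [Fintype ι] [Fintype κ]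

def n2sq (v : ι → ℂ) : ℝ := ∑ i, ‖v i‖ ^ 2

lemma n2sq_nonneg (v : ι → ℂ) : 0 ≤ n2sq v :=
  Finset.sum_nonneg fun _ _ => sq_nonneg _

lemma star_dot_self (v : ι → ℂ) : dotProduct (star v) v = ((n2sq v : ℝ) : ℂ) := by
  unfold n2sq
  push_cast
  refine Finset.sum_congr rfl fun i _ => ?_
  simp only [dotProduct, Pi.star_apply, Complex.star_def]
  rw [← Complex.normSq_eq_conj_mul_self]
  simp [Complex.normSq_eq_norm_sq, ← Complex.ofReal_pow]

lemma cs_bound (a b : ι → ℂ) :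
    ‖dotProduct (star a) b‖ ≤ Real.sqrt (n2sq a) * Real.sqrt (n2sq b) := by
  have h := norm_inner_le_norm (𝕜 := ℂ) (WithLp.toLp 2 a)
    (WithLp.toLp 2 b)
  rw [EuclideanSpace.inner_toLp_toLp, dotProduct_comm] at h
  rw [EuclideanSpace.norm_eq, EuclideanSpace.norm_eq] at h
  simpa [n2sq] using h

lemma re_dot_le (a b : ι → ℂ) :
    (dotProduct (star a) b).re ≤ Real.sqrt (n2sq a) * Real.sqrt (n2sq b) :=
  le_trans (Complex.re_le_norm _) (by exact cs_bound a b)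

lemma n2sq_star (v : ι → ℂ) : n2sq (star v) = n2sq v := by
  simp [n2sq]

lemma sigmaMin_mulVec {n : Type*} [Fintype n] [DecidableEq n] [Nonempty n]
    (G : Matrix n n ℂ) (c : ℝ) (hc : 0 ≤ c) (h : c ≤ sigmaMin G) (z : n → ℂ) :
    c * Real.sqrt (n2sq z) ≤ Real.sqrt (n2sq (G *ᵥ z)) := by
  have hH := Matrix.isHermitian_conjTranspose_mul_self G
  have hpsd := Matrix.posSemidef_conjTranspose_mul_self G
  have hval : ∀ i, c ^ 2 ≤ hH.eigenvalues i := by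
    intro i
    have h1 : c ≤ Real.sqrt (hH.eigenvalues i) :=
      le_trans h (ciInf_le (Set.finite_range _).bddBelow i)
    calc c ^ 2 ≤ Real.sqrt (hH.eigenvalues i) ^ 2 := pow_le_pow_left₀ hc h1 2
      _ = hH.eigenvalues i := Real.sq_sqrt (hpsd.eigenvalues_nonneg i)
  set W : Matrix n n ℂ := (hH.eigenvectorUnitary : Matrix n n ℂ) with hWdef
  have hWW : W * Wᴴ = 1 := by
    have := (Matrix.mem_unitaryGroup_iff).mp hH.eigenvectorUnitary.2
    rwa [Matrix.star_eq_conjTranspose] at this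
  set w : n → ℂ := Wᴴ *ᵥ z with hwdef
  have hzw : n2sq w = n2sq z := by
    have hd : dotProduct (star w) w = dotProduct (star z) z := by
      rw [hwdef, Matrix.star_mulVec, Matrix.conjTranspose_conjTranspose,
        Matrix.dotProduct_mulVec, Matrix.vecMul_vecMul, hWW, Matrix.vecMul_one]
    have := congrArg Complex.re ((star_dot_self w).symm.trans (hd.trans (star_dot_self z)))
    simpa using this
  set D : Matrix n n ℂ := Matrix.diagonal (RCLike.ofReal ∘ hH.eigenvalues) with hDdef
  have hmain : c ^ 2 * n2sq z ≤ n2sq (G *ᵥ z) := by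
    have hGz : ((n2sq (G *ᵥ z) : ℝ) : ℂ) = dotProduct (star w) (D *ᵥ w) := by
      have hst : Gᴴ * G = W * D * Wᴴ := by
        have h0 := hH.spectral_theorem
        rw [Unitary.conjStarAlgAut_apply, Matrix.star_eq_conjTranspose] at h0
        exact h0
      rw [← star_dot_self]
      rw [hwdef, Matrix.star_mulVec, Matrix.star_mulVec,
        Matrix.conjTranspose_conjTranspose, Matrix.mulVec_mulVec,
        Matrix.dotProduct_mulVec, Matrix.dotProduct_mulVec,
        Matrix.vecMul_vecMul, Matrix.vecMul_vecMul, ← Matrix.mul_assoc, ← hst]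
    have hdiag : (dotProduct (star w) (D *ᵥ w)).re
        = ∑ i, hH.eigenvalues i * ‖w i‖ ^ 2 := by
      rw [dotProduct, Complex.re_sum]
      refine Finset.sum_congr rfl fun i _ => ?_
      rw [hDdef, Matrix.mulVec_diagonal]
      show ((starRingEnd ℂ) (w i) * (((hH.eigenvalues i : ℝ) : ℂ) * w i)).re = _
      rw [show (starRingEnd ℂ) (w i) * (((hH.eigenvalues i : ℝ):ℂ) * w i)
          = ((hH.eigenvalues i : ℝ):ℂ) * ((starRingEnd ℂ) (w i) * w i) by ring,
        ← Complex.normSq_eq_conj_mul_self]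
      simp [Complex.normSq_eq_norm_sq, ← Complex.ofReal_pow,
        ← Complex.ofReal_mul]
    have heq : n2sq (G *ᵥ z) = ∑ i, hH.eigenvalues i * ‖w i‖ ^ 2 := by
      have := congrArg Complex.re hGz
      rwa [Complex.ofReal_re, hdiag] at this
    rw [heq, ← hzw]
    unfold n2sq
    rw [Finset.mul_sum]
    exact Finset.sum_le_sum fun i _ => by nlinarith [hval i, sq_nonneg (‖w i‖)]
  calc c * Real.sqrt (n2sq z) = Real.sqrt (c ^ 2 * n2sq z) := by
        rw [Real.sqrt_mul (sq_nonneg c), Real.sqrt_sq hc]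
    _ ≤ Real.sqrt (n2sq (G *ᵥ z)) := Real.sqrt_le_sqrt hmain

lemma key_vec {r : ℕ} (E : Matrix ι (Fin r) ℂ) (μ1 : ℝ) (hμ1 : 0 < μ1)
    (hG : ∀ z : Fin r → ℂ, (1/μ1) * Real.sqrt (n2sq z) ≤ Real.sqrt (n2sq ((Eᴴ * E) *ᵥ z)))
    {r' : ℕ} (U : Matrix ι (Fin r') ℂ) (hU : Uᴴ * U = 1)
    (C : Matrix (Fin r) (Fin r') ℂ) (hUE : U = E * C)
    (v : ι → ℂ) :
    n2sq ((U * Uᴴ) *ᵥ v) ≤ μ1 * n2sq (Eᴴ *ᵥ v) := by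
  set G : Matrix (Fin r) (Fin r) ℂ := Eᴴ * E with hGdef
  have hdet : IsUnit G.det := by
    rw [isUnit_iff_ne_zero]
    intro hd
    obtain ⟨y, hy0, hy⟩ := (Matrix.exists_mulVec_eq_zero_iff).mpr hd
    have h1 := hG y
    rw [hy] at h1
    have h2 : n2sq (0 : Fin r → ℂ) = 0 := by simp [n2sq]
    rw [h2, Real.sqrt_zero] at h1
    have h3 : 0 < n2sq y := by
      obtain ⟨i, hi⟩ := Function.ne_iff.mp hy0
      have h0 : 0 < ‖y i‖ ^ 2 := pow_pos (norm_pos_iff.mpr hi) 2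
      exact lt_of_lt_of_le h0 (Finset.single_le_sum (f := fun i => ‖y i‖^2)
        (fun j _ => sq_nonneg _) (Finset.mem_univ i))
    have h4 : 0 < (1/μ1) * Real.sqrt (n2sq y) := by positivity
    linarith
  have hGinv : G * G⁻¹ = 1 := Matrix.mul_nonsing_inv G hdet
  have hGinv' : G⁻¹ * G = 1 := Matrix.nonsing_inv_mul G hdet
  have hGherm : Gᴴ = G := by
    rw [hGdef]; simp [Matrix.conjTranspose_mul]
  have hGinvherm : (G⁻¹)ᴴ = G⁻¹ := by
    rw [Matrix.conjTranspose_nonsing_inv, hGherm]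
  set P : Matrix ι ι ℂ := E * G⁻¹ * Eᴴ with hPdef
  have hPherm : Pᴴ = P := by
    rw [hPdef]
    simp [Matrix.conjTranspose_mul, hGinvherm, Matrix.mul_assoc]
  have hPU : P * U = U := by
    rw [hUE, hPdef]
    simp only [Matrix.mul_assoc]
    rw [← Matrix.mul_assoc Eᴴ E C, ← hGdef, ← Matrix.mul_assoc G⁻¹ G C, hGinv',
      Matrix.one_mul]
  have hUP : Uᴴ * P = Uᴴ := by
    have := congrArg Matrix.conjTranspose hPU
    rwa [Matrix.conjTranspose_mul, hPherm] at this
  have hPP : P * P = P := by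
    rw [hPdef]
    simp only [Matrix.mul_assoc]
    rw [← Matrix.mul_assoc Eᴴ E _, ← hGdef, ← Matrix.mul_assoc G⁻¹ G _, hGinv',
      Matrix.one_mul]
  set u : Fin r' → ℂ := Uᴴ *ᵥ v with hudef
  set w : Fin r → ℂ := Eᴴ *ᵥ v with hwdef
  have step1 : n2sq ((U * Uᴴ) *ᵥ v) = n2sq u := by
    have hd : dotProduct (star ((U * Uᴴ) *ᵥ v)) ((U * Uᴴ) *ᵥ v)
        = dotProduct (star u) u := by
      rw [← Matrix.mulVec_mulVec, ← hudef, Matrix.star_mulVec,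
        Matrix.dotProduct_mulVec, Matrix.vecMul_vecMul, hU, Matrix.vecMul_one]
    have := congrArg Complex.re ((star_dot_self _).symm.trans (hd.trans (star_dot_self u)))
    simpa using this
  have step2 : n2sq u ≤ n2sq (P *ᵥ v) := by
    have hre : dotProduct (star ((U * Uᴴ) *ᵥ v)) (P *ᵥ v) = ((n2sq u : ℝ) : ℂ) := by
      rw [Matrix.star_mulVec, Matrix.conjTranspose_mul, Matrix.conjTranspose_conjTranspose,
        Matrix.dotProduct_mulVec, Matrix.vecMul_vecMul]
      rw [Matrix.mul_assoc U Uᴴ P, hUP, ← Matrix.vecMul_vecMul, ← Matrix.dotProduct_mulVec]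
      rw [show star v ᵥ* U = star u from by rw [hudef, Matrix.star_mulVec,
        Matrix.conjTranspose_conjTranspose], star_dot_self]
    have h5 : n2sq u ≤ Real.sqrt (n2sq ((U * Uᴴ) *ᵥ v)) * Real.sqrt (n2sq (P *ᵥ v)) := by
      have := re_dot_le ((U * Uᴴ) *ᵥ v) (P *ᵥ v)
      rw [hre] at this
      simpa using this
    rw [step1] at h5
    nlinarith [Real.sq_sqrt (n2sq_nonneg u), Real.sq_sqrt (n2sq_nonneg (P *ᵥ v)),
      Real.sqrt_nonneg (n2sq u), Real.sqrt_nonneg (n2sq (P *ᵥ v)),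
      sq_nonneg (Real.sqrt (n2sq u) - Real.sqrt (n2sq (P *ᵥ v)))]
  have step3 : n2sq (P *ᵥ v) ≤ μ1 * n2sq w := by
    set z : Fin r → ℂ := G⁻¹ *ᵥ w with hzdef
    have hwz : w = G *ᵥ z := by
      rw [hzdef, Matrix.mulVec_mulVec, hGinv, Matrix.one_mulVec]
    have hzle : Real.sqrt (n2sq z) ≤ μ1 * Real.sqrt (n2sq w) := by
      have h1 := hG z
      rw [← hwz] at h1
      calc Real.sqrt (n2sq z) = μ1 * ((1/μ1) * Real.sqrt (n2sq z)) := by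
            field_simp
        _ ≤ μ1 * Real.sqrt (n2sq w) := mul_le_mul_of_nonneg_left h1 (le_of_lt hμ1)
    have hPv : dotProduct (star (P *ᵥ v)) (P *ᵥ v)
        = dotProduct (star w) z := by
      conv_rhs => rw [hzdef, Matrix.dotProduct_mulVec, hwdef, Matrix.star_mulVec,
        Matrix.conjTranspose_conjTranspose, Matrix.dotProduct_mulVec,
        Matrix.vecMul_vecMul, Matrix.vecMul_vecMul]
      rw [Matrix.star_mulVec, Matrix.dotProduct_mulVec, Matrix.vecMul_vecMul, hPherm,
        hPP, hPdef, Matrix.mul_assoc]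
    have h6 : n2sq (P *ᵥ v) = (dotProduct (star w) z).re := by
      have := congrArg Complex.re ((star_dot_self (P *ᵥ v)).symm.trans hPv)
      simpa using this
    have h7 := re_dot_le w z
    have h8 : Real.sqrt (n2sq w) * Real.sqrt (n2sq z)
        ≤ μ1 * (Real.sqrt (n2sq w) * Real.sqrt (n2sq w)) := by
      calc Real.sqrt (n2sq w) * Real.sqrt (n2sq z)
          ≤ Real.sqrt (n2sq w) * (μ1 * Real.sqrt (n2sq w)) :=
            mul_le_mul_of_nonneg_left hzle (Real.sqrt_nonneg _)
        _ = μ1 * (Real.sqrt (n2sq w) * Real.sqrt (n2sq w)) := by ring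
    have h9 : Real.sqrt (n2sq w) * Real.sqrt (n2sq w) = n2sq w :=
      Real.mul_self_sqrt (n2sq_nonneg w)
    rw [h9] at h8
    rw [h6]
    linarith
  rw [step1]
  exact le_trans step2 step3

def SS {p q : Type*} [Fintype p] [Fintype q] (M : Matrix p q ℂ) : ℝ :=
  ∑ i, ∑ j, ‖M i j‖ ^ 2

lemma SS_nonneg {p q : Type*} [Fintype p] [Fintype q] (M : Matrix p q ℂ) : 0 ≤ SS M :=
  Finset.sum_nonneg fun _ _ => Finset.sum_nonneg fun _ _ => sq_nonneg _

lemma frob_sq {p q : Type*} [Fintype p] [Fintype q] (M : Matrix p q ℂ) :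
    frob M ^ 2 = SS M := by
  unfold frob SS
  exact Real.sq_sqrt (Finset.sum_nonneg fun _ _ => Finset.sum_nonneg fun _ _ => sq_nonneg _)

lemma SS_conjTranspose {p q : Type*} [Fintype p] [Fintype q] (M : Matrix p q ℂ) :
    SS Mᴴ = SS M := by
  unfold SS
  rw [Finset.sum_comm]
  simp [Matrix.conjTranspose_apply]

lemma col_mulVec {p q s : Type*} [Fintype p] [Fintype q] [Fintype s]
    (A : Matrix p q ℂ) (M : Matrix q s ℂ) (j : s) :
    (fun i => (A * M) i j) = A *ᵥ (fun k => M k j) := by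
  funext i
  simp [Matrix.mul_apply, Matrix.mulVec, dotProduct]

lemma SS_eq_sum_col {p q : Type*} [Fintype p] [Fintype q] (M : Matrix p q ℂ) :
    SS M = ∑ j, n2sq (fun i => M i j) :=
  Finset.sum_comm

lemma key_mat {r r' : ℕ} (E : Matrix ι (Fin r) ℂ) (μ1 : ℝ) (hμ1 : 0 < μ1)
    (hG : ∀ z : Fin r → ℂ, (1/μ1) * Real.sqrt (n2sq z) ≤ Real.sqrt (n2sq ((Eᴴ * E) *ᵥ z)))
    (U : Matrix ι (Fin r') ℂ) (hU : Uᴴ * U = 1)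
    (C : Matrix (Fin r) (Fin r') ℂ) (hUE : U = E * C)
    (M : Matrix ι κ ℂ) :
    SS (U * Uᴴ * M) ≤ μ1 * SS (Eᴴ * M) := by
  rw [SS_eq_sum_col, SS_eq_sum_col, Finset.mul_sum]
  refine Finset.sum_le_sum fun j _ => ?_
  rw [col_mulVec, col_mulVec]
  exact key_vec E μ1 hμ1 hG U hU C hUE _

lemma norm_sum_sq_le (g : ι → ℂ) (h : ∀ x y, g x ≠ 0 → g y ≠ 0 → x = y) :
    ‖∑ i, g i‖ ^ 2 ≤ ∑ i, ‖g i‖ ^ 2 := by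
  by_cases hz : ∀ x, g x = 0
  · simp [hz]
  · push_neg at hz
    obtain ⟨a, ha⟩ := hz
    have hs : ∑ i, g i = g a :=
      Finset.sum_eq_single_of_mem a (Finset.mem_univ a)
        (fun b _ hb => by by_contra hgb; exact hb (h b a hgb ha))
    rw [hs]
    exact Finset.single_le_sum (f := fun i => ‖g i‖^2) (fun i _ => sq_nonneg _)
      (Finset.mem_univ a)

lemma FB {r : ℕ} (F : Matrix (Fin r) ι ℂ) (B : Matrix ι κ ℂ) (c : ℝ)
    (hF : ∀ s i, ‖F s i‖ ≤ c)
    (hB : ∀ (j : κ) (i i' : ι), B i j ≠ 0 → B i' j ≠ 0 → i = i') :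
    SS (F * B) ≤ r * (c ^ 2 * SS B) := by
  have hent : ∀ (s : Fin r) (j : κ), ‖(F * B) s j‖ ^ 2 ≤ ∑ i, c^2 * ‖B i j‖^2 := by
    intro s j
    have h1 : ‖(F*B) s j‖^2 = ‖∑ i, F s i * B i j‖^2 := by rw [Matrix.mul_apply]
    have h2 := norm_sum_sq_le (fun i => F s i * B i j)
      (fun x y hx hy => hB j x y (right_ne_zero_of_mul hx) (right_ne_zero_of_mul hy))
    rw [h1]
    refine le_trans h2 (Finset.sum_le_sum fun i _ => ?_)
    rw [norm_mul, mul_pow]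
    exact mul_le_mul_of_nonneg_right
      (pow_le_pow_left₀ (norm_nonneg _) (hF s i) 2) (sq_nonneg _)
  have h3 : (∑ j : κ, ∑ i : ι, c^2 * ‖B i j‖^2) = c^2 * SS B := by
    rw [Finset.sum_comm]
    unfold SS
    simp [Finset.mul_sum]
  calc SS (F * B) ≤ ∑ _s : Fin r, ∑ j, ∑ i, c^2 * ‖B i j‖^2 :=
      Finset.sum_le_sum fun s _ => Finset.sum_le_sum fun j _ => hent s j
    _ = r * (c^2 * SS B) := by
      rw [Finset.sum_const, Finset.card_univ, Fintype.card_fin, nsmul_eq_mul, h3]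

lemma norm_efreq (f : ℝ) : ‖efreq f‖ = 1 := by
  unfold efreq
  rw [Complex.norm_exp]
  have h : (2 * (Real.pi:ℂ) * Complex.I * (f:ℂ)).re = 0 := by
    simp [Complex.mul_re, Complex.mul_im]
  rw [h, Real.exp_zero]

lemma SS_Amat_le_one (n1 n2 k1 k2 : ℕ) (a : Fin n1 × Fin n2) :
    SS (Amat n1 n2 k1 k2 a) ≤ 1 := by
  classical
  set ω := wcount n1 n2 k1 k2 a with hω
  have h1 : ∀ (ip : Fin k1 × Fin k2) (jq : Fin (n1-k1+1) × Fin (n2-k2+1)),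
      ‖Amat n1 n2 k1 k2 a ip jq‖ ^ 2
      = if ip.1.1 + jq.1.1 = (a.1:ℕ) ∧ ip.2.1 + jq.2.1 = (a.2:ℕ) then ((ω:ℝ))⁻¹ else 0 := by
    intro ip jq
    unfold Amat
    rw [Matrix.of_apply]
    by_cases h : ip.1.1 + jq.1.1 = (a.1:ℕ) ∧ ip.2.1 + jq.2.1 = (a.2:ℕ)
    · rw [if_pos h, if_pos h, Complex.norm_real,
        Real.norm_of_nonneg (by positivity), inv_pow, Real.sq_sqrt (by positivity)]
    · rw [if_neg h, if_neg h]
      simp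
  have h2 : SS (Amat n1 n2 k1 k2 a)
      = ∑ e : (Fin k1 × Fin k2) × (Fin (n1-k1+1) × Fin (n2-k2+1)),
          if e.1.1.1 + e.2.1.1 = (a.1:ℕ) ∧ e.1.2.1 + e.2.2.1 = (a.2:ℕ) then ((ω:ℝ))⁻¹ else 0 := by
    have h2a : SS (Amat n1 n2 k1 k2 a)
        = ∑ e : (Fin k1 × Fin k2) × (Fin (n1-k1+1) × Fin (n2-k2+1)),
            ‖Amat n1 n2 k1 k2 a e.1 e.2‖ ^ 2 :=
      (Fintype.sum_prod_type (f := fun e : (Fin k1 × Fin k2) × (Fin (n1-k1+1) × Fin (n2-k2+1)) =>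
        ‖Amat n1 n2 k1 k2 a e.1 e.2‖ ^ 2)).symm
    rw [h2a]
    exact Finset.sum_congr rfl fun e _ => h1 e.1 e.2
  rw [h2, ← Finset.sum_filter, Finset.sum_const, nsmul_eq_mul]
  have h4 : (Finset.univ.filter fun e : (Fin k1 × Fin k2) × (Fin (n1-k1+1) × Fin (n2-k2+1)) =>
      e.1.1.1 + e.2.1.1 = (a.1:ℕ) ∧ e.1.2.1 + e.2.2.1 = (a.2:ℕ)).card = ω := by
    rw [hω]
    unfold wcount
    congr 1
  rw [h4]
  rcases Nat.eq_zero_or_pos ω with h | h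
  · simp [h]
  · rw [mul_inv_cancel₀ (by exact_mod_cast h.ne')]

lemma Amat_left_support {n1 n2 k1 k2 : ℕ} (a : Fin n1 × Fin n2)
    (jq : Fin (n1-k1+1) × Fin (n2-k2+1)) (ip ip' : Fin k1 × Fin k2)
    (h : Amat n1 n2 k1 k2 a ip jq ≠ 0) (h' : Amat n1 n2 k1 k2 a ip' jq ≠ 0) : ip = ip' := by
  have h1 : ip.1.1 + jq.1.1 = (a.1:ℕ) ∧ ip.2.1 + jq.2.1 = (a.2:ℕ) := by
    by_contra hc
    exact h (by simp [Amat, hc])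
  have h2 : ip'.1.1 + jq.1.1 = (a.1:ℕ) ∧ ip'.2.1 + jq.2.1 = (a.2:ℕ) := by
    by_contra hc
    exact h' (by simp [Amat, hc])
  obtain ⟨ha1, ha2⟩ := h1
  obtain ⟨hb1, hb2⟩ := h2
  refine Prod.ext (Fin.ext ?_) (Fin.ext ?_) <;> omega

lemma Amat_right_support {n1 n2 k1 k2 : ℕ} (a : Fin n1 × Fin n2)
    (ip : Fin k1 × Fin k2) (jq jq' : Fin (n1-k1+1) × Fin (n2-k2+1))
    (h : Amat n1 n2 k1 k2 a ip jq ≠ 0) (h' : Amat n1 n2 k1 k2 a ip jq' ≠ 0) : jq = jq' := by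
  have h1 : ip.1.1 + jq.1.1 = (a.1:ℕ) ∧ ip.2.1 + jq.2.1 = (a.2:ℕ) := by
    by_contra hc
    exact h (by simp [Amat, hc])
  have h2 : ip.1.1 + jq'.1.1 = (a.1:ℕ) ∧ ip.2.1 + jq'.2.1 = (a.2:ℕ) := by
    by_contra hc
    exact h' (by simp [Amat, hc])
  obtain ⟨ha1, ha2⟩ := h1
  obtain ⟨hb1, hb2⟩ := h2
  refine Prod.ext (Fin.ext ?_) (Fin.ext ?_) <;> omega

lemma scalar_id (cK cN a1 a2 b1 b2 ds : ℂ) (h1 : cK ≠ 0) (h2 : cN ≠ 0) :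
    ds * (a1 * b1) * (a2 * b2) = cK * cN * (a1 * a2 / cK * ds * (b1 * b2 / cN)) := by
  field_simp

lemma enhance_eq (n1 n2 r k1 k2 : ℕ) (hk1 : 1 ≤ k1) (hk1' : k1 ≤ n1)
    (hk2 : 1 ≤ k2) (hk2' : k2 ≤ n2) (d : Fin r → ℂ) (f1 f2 : Fin r → ℝ) :
    enhance k1 k2 hk1' hk2' (dataMatrix n1 n2 r d f1 f2)
      = (((Real.sqrt ((k1:ℝ)*k2) : ℝ) : ℂ)
          * ((Real.sqrt (((n1-k1+1:ℕ):ℝ) * ((n2-k2+1:ℕ):ℝ)) : ℝ) : ℂ))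
        • (EL r k1 k2 f1 f2 * Matrix.diagonal d * ER n1 n2 r k1 k2 f1 f2) := by
  have hk1pos : (0:ℝ) < (k1:ℝ) := by exact_mod_cast hk1
  have hk2pos : (0:ℝ) < (k2:ℝ) := by exact_mod_cast hk2
  have hKpos : (0:ℝ) < Real.sqrt ((k1:ℝ)*k2) := Real.sqrt_pos.mpr (by positivity)
  have hN1pos : (0:ℝ) < ((n1-k1+1:ℕ):ℝ) := by positivity
  have hN2pos : (0:ℝ) < ((n2-k2+1:ℕ):ℝ) := by positivity
  have hNpos : (0:ℝ) < Real.sqrt (((n1-k1+1:ℕ):ℝ) * ((n2-k2+1:ℕ):ℝ)) :=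
    Real.sqrt_pos.mpr (by positivity)
  have hK0 : ((Real.sqrt ((k1:ℝ)*k2) : ℝ) : ℂ) ≠ 0 := by
    exact_mod_cast hKpos.ne'
  have hN0 : ((Real.sqrt (((n1-k1+1:ℕ):ℝ) * ((n2-k2+1:ℕ):ℝ)) : ℝ) : ℂ) ≠ 0 := by
    exact_mod_cast hNpos.ne'
  have hmul : ∀ ip jq, (EL r k1 k2 f1 f2 * Matrix.diagonal d * ER n1 n2 r k1 k2 f1 f2) ip jq
      = ∑ s, EL r k1 k2 f1 f2 ip s * d s * ER n1 n2 r k1 k2 f1 f2 s jq := by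
    intro ip jq
    rw [Matrix.mul_apply]
    refine Finset.sum_congr rfl fun s _ => ?_
    rw [Matrix.mul_diagonal]
  ext ip jq
  rw [Matrix.smul_apply, hmul ip jq, smul_eq_mul, Finset.mul_sum]
  simp only [enhance, dataMatrix, EL, ER, Matrix.of_apply, Fin.val_mk]
  refine Finset.sum_congr rfl fun s _ => ?_
  rw [pow_add, pow_add]
  exact scalar_id _ _ _ _ _ _ _ hK0 hN0

end EMaCAux

open EMaC in
/-- Lemma 2, first part: under the incoherence property, the
projections of each basis matrix `A_{(k,l)}` onto the column and row spaces of
`X_e` satisfy `‖U U* A_{(k,l)}‖_F² ≤ μ1 c_s r/(n1 n2)` and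
`‖A_{(k,l)} V V*‖_F² ≤ μ1 c_s r/(n1 n2)`. -/
theorem incoherence_basis_projection_bounds
    (n1 n2 r r' k1 k2 : ℕ) (hn1 : 0 < n1) (hn2 : 0 < n2) (hr : 0 < r)
    (hk1 : 1 ≤ k1) (hk1' : k1 ≤ n1) (hk2 : 1 ≤ k2) (hk2' : k2 ≤ n2)
    (d : Fin r → ℂ) (f1 f2 : Fin r → ℝ)
    (hmodel : SpectralModel r f1 f2)
    (μ1 : ℝ) (hμ1 : 0 < μ1)
    (hinc : Incoherent n1 n2 r k1 k2 f1 f2 μ1)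
    (U : Matrix (Fin k1 × Fin k2) (Fin r') ℂ) (σ : Fin r' → ℝ)
    (V : Matrix (Fin (n1 - k1 + 1) × Fin (n2 - k2 + 1)) (Fin r') ℂ)
    (hsvd : CompactSVD (enhance k1 k2 hk1' hk2' (dataMatrix n1 n2 r d f1 f2)) U σ V) :
    ∀ a : Fin n1 × Fin n2,
      frob (U * Uᴴ * Amat n1 n2 k1 k2 a) ^ 2 ≤
          μ1 * cs n1 n2 k1 k2 * r / ((n1 : ℝ) * n2) ∧
        frob (Amat n1 n2 k1 k2 a * (V * Vᴴ)) ^ 2 ≤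
          μ1 * cs n1 n2 k1 k2 * r / ((n1 : ℝ) * n2) := by
  intro a
  have hrne : Nonempty (Fin r) := Fin.pos_iff_nonempty.mp hr
  classical
  obtain ⟨hincL, hincR⟩ := hinc
  have hdecomp := hsvd.decomp
  rw [EMaCAux.enhance_eq n1 n2 r k1 k2 hk1 hk1' hk2 hk2' d f1 f2] at hdecomp
  have hk1pos : (0:ℝ) < (k1:ℝ) := by exact_mod_cast hk1
  have hk2pos : (0:ℝ) < (k2:ℝ) := by exact_mod_cast hk2
  have hn1pos : (0:ℝ) < (n1:ℝ) := by exact_mod_cast hn1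
  have hn2pos : (0:ℝ) < (n2:ℝ) := by exact_mod_cast hn2
  have hN1pos : (0:ℝ) < ((n1-k1+1:ℕ):ℝ) := by positivity
  have hN2pos : (0:ℝ) < ((n2-k2+1:ℕ):ℝ) := by positivity
  set ELm := EL r k1 k2 f1 f2 with hELm
  set ERm := ER n1 n2 r k1 k2 f1 f2 with hERm
  set Am := Amat n1 n2 k1 k2 a with hAm
  set K : ℝ := Real.sqrt ((k1:ℝ)*k2) with hK
  set N : ℝ := Real.sqrt (((n1-k1+1:ℕ):ℝ) * ((n2-k2+1:ℕ):ℝ)) with hN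
  have hKpos : 0 < K := by rw [hK]; exact Real.sqrt_pos.mpr (by positivity)
  have hNpos : 0 < N := by rw [hN]; exact Real.sqrt_pos.mpr (by positivity)
  set c : ℂ := ((K:ℝ):ℂ) * ((N:ℝ):ℂ) with hc
  set Λ : Matrix (Fin r') (Fin r') ℂ :=
    Matrix.diagonal (fun i : Fin r' => ((σ i : ℝ) : ℂ)) with hΛ
  set Λi : Matrix (Fin r') (Fin r') ℂ :=
    Matrix.diagonal (fun i : Fin r' => (((σ i : ℝ) : ℂ))⁻¹) with hΛi
  have hΛΛi : Λ * Λi = 1 := by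
    rw [hΛ, hΛi, Matrix.diagonal_mul_diagonal]
    have h0 : (fun i : Fin r' => ((σ i : ℝ) : ℂ) * (((σ i : ℝ) : ℂ))⁻¹)
        = fun _ => (1:ℂ) := by
      funext i
      exact mul_inv_cancel₀ (by exact_mod_cast (hsvd.sigma_pos i).ne')
    rw [h0, Matrix.diagonal_one]
  -- Column space part
  have hGL : ∀ z : Fin r → ℂ, (1/μ1) * Real.sqrt (EMaCAux.n2sq z)
      ≤ Real.sqrt (EMaCAux.n2sq ((ELmᴴ * ELm) *ᵥ z)) :=
    fun z => EMaCAux.sigmaMin_mulVec (ELmᴴ * ELm) (1/μ1) (by positivity) hincL z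
  have hXUΛ : U * Λ * Vᴴ * V = U * Λ := by
    rw [Matrix.mul_assoc (U * Λ) Vᴴ V, hsvd.V_orth, Matrix.mul_one]
  have hUeq : U = (c • (ELm * Matrix.diagonal d * ERm)) * V * Λi := by
    calc U = U * (Λ * Λi) := by rw [hΛΛi, Matrix.mul_one]
      _ = U * Λ * Λi := by rw [Matrix.mul_assoc]
      _ = (U * Λ * Vᴴ * V) * Λi := by rw [hXUΛ]
      _ = (c • (ELm * Matrix.diagonal d * ERm)) * V * Λi := by
          rw [Matrix.mul_assoc (U * Λ * Vᴴ) V Λi, ← hdecomp, ← Matrix.mul_assoc]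
  have hUEC : U = ELm * (c • (Matrix.diagonal d * ERm * V * Λi)) := by
    rw [hUeq]
    simp only [Matrix.smul_mul, Matrix.mul_smul, Matrix.mul_assoc]
  have hkeyL := EMaCAux.key_mat ELm μ1 hμ1 hGL U hsvd.U_orth _ hUEC Am
  have hFL : ∀ (s : Fin r) (ip : Fin k1 × Fin k2), ‖(ELmᴴ) s ip‖ ≤ K⁻¹ := by
    intro s ip
    rw [Matrix.conjTranspose_apply, norm_star, hELm]
    show ‖efreq (f1 s) ^ (ip.1 : ℕ) * efreq (f2 s) ^ (ip.2 : ℕ)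
      / ((Real.sqrt ((k1 : ℝ) * k2) : ℝ) : ℂ)‖ ≤ K⁻¹
    rw [norm_div, norm_mul, norm_pow, norm_pow, EMaCAux.norm_efreq, EMaCAux.norm_efreq,
      one_pow, one_pow, one_mul, Complex.norm_real,
      Real.norm_of_nonneg (Real.sqrt_nonneg _), ← hK, one_div]
  have hBL : ∀ (j : Fin (n1-k1+1) × Fin (n2-k2+1)) (i i' : Fin k1 × Fin k2),
      Am i j ≠ 0 → Am i' j ≠ 0 → i = i' :=
    fun j i i' hx hy => EMaCAux.Amat_left_support a j i i' hx hy
  have hFBL := EMaCAux.FB (ELmᴴ) Am (K⁻¹) hFL hBL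
  have hSSA : EMaCAux.SS Am ≤ 1 := EMaCAux.SS_Amat_le_one n1 n2 k1 k2 a
  have hKinv2 : (K⁻¹)^2 = ((k1:ℝ)*k2)⁻¹ := by
    rw [inv_pow, hK, Real.sq_sqrt (by positivity)]
  have hcol : frob (U * Uᴴ * Am)^2 ≤ μ1 * ((r:ℝ) * ((k1:ℝ)*k2)⁻¹) := by
    rw [EMaCAux.frob_sq]
    refine le_trans hkeyL (mul_le_mul_of_nonneg_left (le_trans hFBL ?_) hμ1.le)
    rw [hKinv2]
    refine mul_le_mul_of_nonneg_left ?_ (Nat.cast_nonneg r)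
    calc ((k1:ℝ)*k2)⁻¹ * EMaCAux.SS Am ≤ ((k1:ℝ)*k2)⁻¹ * 1 :=
        mul_le_mul_of_nonneg_left hSSA (by positivity)
      _ = ((k1:ℝ)*k2)⁻¹ := mul_one _
  have harithL : μ1 * ((r:ℝ) * ((k1:ℝ)*k2)⁻¹)
      ≤ μ1 * cs n1 n2 k1 k2 * r / ((n1 : ℝ) * n2) := by
    have hcs : ((n1:ℝ)*n2)/((k1:ℝ)*k2) ≤ cs n1 n2 k1 k2 := le_max_left _ _
    have heq : μ1 * ((r:ℝ) * ((k1:ℝ)*k2)⁻¹)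
        = μ1 * (((n1:ℝ)*n2)/((k1:ℝ)*k2)) * r / ((n1:ℝ)*n2) := by
      field_simp
    rw [heq]
    have h10 : μ1 * (((n1:ℝ)*n2)/((k1:ℝ)*k2)) * r ≤ μ1 * cs n1 n2 k1 k2 * r :=
      mul_le_mul_of_nonneg_right (mul_le_mul_of_nonneg_left hcs hμ1.le) (Nat.cast_nonneg r)
    exact div_le_div_of_nonneg_right h10 (by positivity)
  -- Row space part
  have hGR : ∀ z : Fin r → ℂ, (1/μ1) * Real.sqrt (EMaCAux.n2sq z)
      ≤ Real.sqrt (EMaCAux.n2sq (((ERmᴴ)ᴴ * ERmᴴ) *ᵥ z)) := by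
    intro z
    have hherm : (ERm * ERmᴴ)ᴴ = ERm * ERmᴴ := by
      simp [Matrix.conjTranspose_mul]
    have h1 := EMaCAux.sigmaMin_mulVec ((ERm * ERmᴴ)ᵀ) (1/μ1) (by positivity) hincR (star z)
    rw [EMaCAux.n2sq_star] at h1
    have h2 : ((ERm * ERmᴴ)ᵀ) *ᵥ (star z) = star ((ERm * ERmᴴ) *ᵥ z) := by
      rw [Matrix.mulVec_transpose, Matrix.star_mulVec, hherm]
    rw [h2, EMaCAux.n2sq_star] at h1
    simpa [Matrix.conjTranspose_conjTranspose] using h1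
  have hΛherm : Λᴴ = Λ := by
    rw [hΛ, Matrix.diagonal_conjTranspose]
    have hsf : (star fun i : Fin r' => ((σ i : ℝ) : ℂ)) = fun i : Fin r' => ((σ i : ℝ) : ℂ) := by
      funext i
      rw [Pi.star_apply, Complex.star_def, Complex.conj_ofReal]
    rw [hsf]
  have hstarc : star c = c := by
    rw [hc]
    simp [Complex.conj_ofReal, mul_comm]
  have hdecompT : c • (ERmᴴ * ((Matrix.diagonal d)ᴴ * ELmᴴ)) = V * (Λ * Uᴴ) := by
    have h := congrArg Matrix.conjTranspose hdecomp
    simp only [Matrix.conjTranspose_smul, Matrix.conjTranspose_mul,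
      Matrix.conjTranspose_conjTranspose, hΛherm, Matrix.mul_assoc] at h
    rwa [hstarc] at h
  have hVeq : V = (c • (ERmᴴ * ((Matrix.diagonal d)ᴴ * ELmᴴ))) * U * Λi := by
    calc V = V * (Λ * Λi) := by rw [hΛΛi, Matrix.mul_one]
      _ = V * Λ * Λi := by rw [Matrix.mul_assoc]
      _ = (V * Λ * Uᴴ * U) * Λi := by
          rw [Matrix.mul_assoc (V * Λ) Uᴴ U, hsvd.U_orth, Matrix.mul_one]
      _ = (V * (Λ * Uᴴ)) * U * Λi := by rw [Matrix.mul_assoc V Λ Uᴴ]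
      _ = (c • (ERmᴴ * ((Matrix.diagonal d)ᴴ * ELmᴴ))) * U * Λi := by rw [hdecompT]
  have hVEC : V = ERmᴴ * (c • ((Matrix.diagonal d)ᴴ * ELmᴴ * U * Λi)) := by
    rw [hVeq]
    simp only [Matrix.smul_mul, Matrix.mul_smul, Matrix.mul_assoc]
  have hkeyR := EMaCAux.key_mat (ERmᴴ) μ1 hμ1 hGR V hsvd.V_orth _ hVEC (Amᴴ)
  have hFR : ∀ (s : Fin r) (jq : Fin (n1-k1+1) × Fin (n2-k2+1)), ‖ERm s jq‖ ≤ N⁻¹ := by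
    intro s jq
    rw [hERm]
    show ‖efreq (f1 s) ^ (jq.1 : ℕ) * efreq (f2 s) ^ (jq.2 : ℕ)
      / ((Real.sqrt (((n1 - k1 + 1 : ℕ) : ℝ) * ((n2 - k2 + 1 : ℕ) : ℝ)) : ℝ) : ℂ)‖ ≤ N⁻¹
    rw [norm_div, norm_mul, norm_pow, norm_pow, EMaCAux.norm_efreq, EMaCAux.norm_efreq,
      one_pow, one_pow, one_mul, Complex.norm_real,
      Real.norm_of_nonneg (Real.sqrt_nonneg _), ← hN, one_div]
  have hBR : ∀ (j : Fin k1 × Fin k2) (i i' : Fin (n1-k1+1) × Fin (n2-k2+1)),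
      (Amᴴ) i j ≠ 0 → (Amᴴ) i' j ≠ 0 → i = i' := by
    intro j i i' hx hy
    rw [Matrix.conjTranspose_apply] at hx hy
    exact EMaCAux.Amat_right_support a j i i' (star_ne_zero.mp hx) (star_ne_zero.mp hy)
  have hFBR := EMaCAux.FB ERm (Amᴴ) (N⁻¹) hFR hBR
  have hNinv2 : (N⁻¹)^2 = (((n1-k1+1:ℕ):ℝ) * ((n2-k2+1:ℕ):ℝ))⁻¹ := by
    rw [inv_pow, hN, Real.sq_sqrt (by positivity)]
  have hrow1 : frob (Am * (V * Vᴴ))^2 = EMaCAux.SS (V * Vᴴ * Amᴴ) := by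
    rw [EMaCAux.frob_sq, ← EMaCAux.SS_conjTranspose (Am * (V * Vᴴ))]
    congr 1
    simp [Matrix.conjTranspose_mul, Matrix.conjTranspose_conjTranspose, Matrix.mul_assoc]
  have hrow : frob (Am * (V * Vᴴ))^2 ≤ μ1 * ((r:ℝ) * (((n1-k1+1:ℕ):ℝ) * ((n2-k2+1:ℕ):ℝ))⁻¹) := by
    rw [hrow1]
    refine le_trans hkeyR ?_
    rw [Matrix.conjTranspose_conjTranspose]
    refine mul_le_mul_of_nonneg_left (le_trans hFBR ?_) hμ1.le
    rw [hNinv2]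
    refine mul_le_mul_of_nonneg_left ?_ (Nat.cast_nonneg r)
    rw [EMaCAux.SS_conjTranspose]
    calc (((n1-k1+1:ℕ):ℝ) * ((n2-k2+1:ℕ):ℝ))⁻¹ * EMaCAux.SS Am
        ≤ (((n1-k1+1:ℕ):ℝ) * ((n2-k2+1:ℕ):ℝ))⁻¹ * 1 :=
          mul_le_mul_of_nonneg_left hSSA (by positivity)
      _ = (((n1-k1+1:ℕ):ℝ) * ((n2-k2+1:ℕ):ℝ))⁻¹ := mul_one _
  have harithR : μ1 * ((r:ℝ) * (((n1-k1+1:ℕ):ℝ) * ((n2-k2+1:ℕ):ℝ))⁻¹)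
      ≤ μ1 * cs n1 n2 k1 k2 * r / ((n1 : ℝ) * n2) := by
    have hcs : ((n1:ℝ)*n2)/(((n1-k1+1:ℕ):ℝ) * ((n2-k2+1:ℕ):ℝ)) ≤ cs n1 n2 k1 k2 :=
      le_max_right _ _
    have heqgen : ∀ X : ℝ, 0 < X → μ1 * ((r:ℝ) * X⁻¹)
        = μ1 * (((n1:ℝ)*n2)/X) * r / ((n1:ℝ)*n2) := by
      intro X hX
      field_simp
    have heq := heqgen ((((n1-k1+1:ℕ):ℝ) * ((n2-k2+1:ℕ):ℝ))) (by positivity)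
    rw [heq]
    have h10 : μ1 * (((n1:ℝ)*n2)/(((n1-k1+1:ℕ):ℝ) * ((n2-k2+1:ℕ):ℝ))) * r
        ≤ μ1 * cs n1 n2 k1 k2 * r :=
      mul_le_mul_of_nonneg_right (mul_le_mul_of_nonneg_left hcs hμ1.le) (Nat.cast_nonneg r)
    exact div_le_div_of_nonneg_right h10 (by positivity)
  exact ⟨le_trans hcol harithL, le_trans hrow harithR⟩
end
end

section
/- (Lemma 8, part 1.) Suppose X ∈ ℂ^{n1×n2} is the data matrix of the 2-D spectral model satisfying the incoherence property with parameter μ1, with enhanced form X_e = U Λ V* (compact SVD). Then ‖U V*‖_{A,∞} ≤ μ1·c_s·r/(n1 n2); in fact every entry of U V* has modulus at most μ1·c_s·r/(n1 n2). -/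
open scoped Classical
open Matrix

noncomputable section

lemma star_dot_self_re {n : Type*} [Fintype n] (v : n → ℂ) :
    (star v ⬝ᵥ v).re = ∑ i, ‖v i‖^2 := by
  simp [dotProduct, Complex.re_sum, Complex.conj_mul', ← Complex.ofReal_pow]

lemma herm_quad_lower {n : Type*} [Fintype n] [DecidableEq n] (A : Matrix n n ℂ)
    (hA : A.IsHermitian) (c : ℝ) (h : ∀ i, c ≤ hA.eigenvalues i) (x : n → ℂ) :
    c * ∑ i, ‖x i‖^2 ≤ (star x ⬝ᵥ A *ᵥ x).re := by
  set Um : Matrix n n ℂ := (hA.eigenvectorUnitary : Matrix n n ℂ) with hUm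
  set z : n → ℂ := star Um *ᵥ x with hz
  have hstz : star x ᵥ* Um = star z := by
    rw [hz, star_mulVec, star_eq_conjTranspose, conjTranspose_conjTranspose]
  have hUU : Um * star Um = 1 := (Matrix.mem_unitaryGroup_iff).mp (hA.eigenvectorUnitary).2
  have hqz : star x ⬝ᵥ A *ᵥ x = ∑ i, (hA.eigenvalues i : ℂ) * (starRingEnd ℂ (z i) * z i) := by
    conv_lhs => rw [hA.spectral_theorem, Unitary.conjStarAlgAut_apply]
    rw [← mulVec_mulVec, ← mulVec_mulVec, dotProduct_mulVec, hstz]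
    simp [dotProduct, mulVec_diagonal]
    exact Finset.sum_congr rfl fun i _ => by ring
  have hnz : ∑ i, ‖x i‖^2 = ∑ i, ‖z i‖^2 := by
    have h1 : star z ⬝ᵥ z = star x ⬝ᵥ x := by
      calc star z ⬝ᵥ z = (star x ᵥ* Um) ⬝ᵥ z := by rw [hstz]
        _ = star x ⬝ᵥ (Um *ᵥ z) := (dotProduct_mulVec _ _ _).symm
        _ = star x ⬝ᵥ x := by rw [hz, mulVec_mulVec, hUU, one_mulVec]
    have := congrArg Complex.re h1
    rw [star_dot_self_re, star_dot_self_re] at this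
    exact this.symm
  have hre : (star x ⬝ᵥ A *ᵥ x).re = ∑ i, hA.eigenvalues i * ‖z i‖^2 := by
    rw [hqz, Complex.re_sum]
    refine Finset.sum_congr rfl fun i _ => ?_
    simp [Complex.conj_mul', ← Complex.ofReal_pow, ← Complex.ofReal_mul]
  rw [hre, hnz, Finset.mul_sum]
  exact Finset.sum_le_sum fun i _ => by
    have := h i
    nlinarith [sq_nonneg (‖z i‖)]

lemma eigenvectorBasis_sq_sum {n : Type*} [Fintype n] [DecidableEq n]
    {A : Matrix n n ℂ} (hH : A.IsHermitian) (i : n) :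
    ∑ j, ‖(hH.eigenvectorBasis i) j‖^2 = 1 := by
  have h1 := hH.eigenvectorBasis.orthonormal.1 i
  rw [EuclideanSpace.norm_eq] at h1
  have h2 : ∑ j, ‖(hH.eigenvectorBasis i) j‖^2
      = (Real.sqrt (∑ j, ‖(hH.eigenvectorBasis i) j‖^2))^2 :=
    (Real.sq_sqrt (Finset.sum_nonneg fun j _ => sq_nonneg _)).symm
  rw [h2, h1, one_pow]

open scoped ComplexOrder in
lemma sigmaMin_psd_quad {n : Type*} [Fintype n] [DecidableEq n] [Nonempty n]
    (A : Matrix n n ℂ) (hH : A.IsHermitian)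
    (hpsd : ∀ y : n → ℂ, 0 ≤ (star y ⬝ᵥ A *ᵥ y).re) {c : ℝ} (hc : 0 < c)
    (h : c ≤ EMaC.sigmaMin A) (x : n → ℂ) :
    c * ∑ i, ‖x i‖^2 ≤ (star x ⬝ᵥ A *ᵥ x).re := by
  have hB := Matrix.isHermitian_conjTranspose_mul_self A
  have hBev : ∀ i, c^2 ≤ hB.eigenvalues i := by
    intro i
    have h1 : c ≤ Real.sqrt (hB.eigenvalues i) :=
      le_trans h (ciInf_le (Finite.bddBelow_range _) i)
    have h2 : 0 ≤ hB.eigenvalues i :=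
      (Matrix.posSemidef_conjTranspose_mul_self A).eigenvalues_nonneg i
    nlinarith [Real.sq_sqrt h2, Real.sqrt_nonneg (hB.eigenvalues i)]
  have hnb : ∀ y : n → ℂ, c^2 * ∑ i, ‖y i‖^2 ≤ ∑ j, ‖(A *ᵥ y) j‖^2 := by
    intro y
    have he : (star y ⬝ᵥ (Aᴴ * A) *ᵥ y) = star (A *ᵥ y) ⬝ᵥ (A *ᵥ y) := by
      rw [← Matrix.mulVec_mulVec, Matrix.dotProduct_mulVec, ← Matrix.star_mulVec]
    calc c^2 * ∑ i, ‖y i‖^2 ≤ (star y ⬝ᵥ (Aᴴ * A) *ᵥ y).re :=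
          herm_quad_lower _ hB (c^2) hBev y
      _ = ∑ j, ‖(A *ᵥ y) j‖^2 := by rw [he, star_dot_self_re]
  have hev : ∀ i, c ≤ hH.eigenvalues i := by
    intro i
    set v : n → ℂ := ⇑(hH.eigenvectorBasis i) with hv
    have hv1 : ∑ j, ‖v j‖^2 = 1 := eigenvectorBasis_sq_sum hH i
    have hAv : A *ᵥ v = hH.eigenvalues i • v := hH.mulVec_eigenvectorBasis i
    have h2 := hnb v
    have h3 : ∑ j, ‖(hH.eigenvalues i • v) j‖^2 = (hH.eigenvalues i)^2 := by
      have h3a : ∀ j, ‖(hH.eigenvalues i • v) j‖^2 = (hH.eigenvalues i)^2 * ‖v j‖^2 := by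
        intro j
        rw [Pi.smul_apply, norm_smul, mul_pow, Real.norm_eq_abs, sq_abs]
      rw [Finset.sum_congr rfl fun j _ => h3a j, ← Finset.mul_sum, hv1, mul_one]
    rw [hAv, h3, hv1, mul_one] at h2
    have h4 : 0 ≤ hH.eigenvalues i := by
      have h5 := hpsd v
      have h6 : star v ⬝ᵥ A *ᵥ v = (hH.eigenvalues i : ℂ) * (star v ⬝ᵥ v) := by
        rw [hAv, dotProduct_smul, Complex.real_smul]
      rw [h6] at h5
      have h7 : (star v ⬝ᵥ v) = ((1:ℝ) : ℂ) := by
        have := star_dot_self_re v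
        rw [hv1] at this
        have him : (star v ⬝ᵥ v).im = 0 := by
          simp [dotProduct, Complex.im_sum, Complex.conj_mul', ← Complex.ofReal_pow]
        exact Complex.ext (by simpa using this) (by simpa using him)
      rw [h7] at h5
      simpa using h5
    nlinarith
  exact herm_quad_lower _ hH c hev x

lemma norm_mulVec_sq {m k : Type*} [Fintype m] [Fintype k] (M : Matrix m k ℂ) (x : k → ℂ) :
    (star x ⬝ᵥ (Mᴴ * M) *ᵥ x).re = ∑ j, ‖(M *ᵥ x) j‖^2 := by
  rw [← Matrix.mulVec_mulVec, Matrix.dotProduct_mulVec, ← Matrix.star_mulVec, star_dot_self_re]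

lemma dot_transpose {m : Type*} [Fintype m] (H : Matrix m m ℂ) (x : m → ℂ) :
    star x ⬝ᵥ Hᵀ *ᵥ x = star (star x) ⬝ᵥ H *ᵥ (star x) := by
  simp only [dotProduct, Matrix.mulVec, Matrix.transpose_apply, Pi.star_apply,
    star_star, Finset.mul_sum]
  rw [Finset.sum_comm]
  exact Finset.sum_congr rfl fun i _ => Finset.sum_congr rfl fun j _ => by ring

lemma cs_dot {n : Type*} [Fintype n] (a b : n → ℂ) :
    ‖star a ⬝ᵥ b‖ ≤ Real.sqrt (∑ i, ‖a i‖^2) * Real.sqrt (∑ i, ‖b i‖^2) := by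
  calc ‖star a ⬝ᵥ b‖ ≤ ∑ i, ‖a i‖ * ‖b i‖ := by
        refine le_trans (norm_sum_le _ _) (Finset.sum_le_sum fun i _ => ?_)
        rw [Pi.star_apply, norm_mul, norm_star]
    _ ≤ _ := Real.sum_mul_le_sqrt_mul_sqrt _ _ _

lemma adj_bound {m k : Type*} [Fintype m] [Fintype k] (W : Matrix m k ℂ) (μ : ℝ) (hμ : 0 ≤ μ)
    (hop : ∀ x : k → ℂ, ∑ s, ‖(W *ᵥ x) s‖^2 ≤ μ * ∑ t, ‖x t‖^2) (v : m → ℂ) :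
    ∑ t, ‖(Wᴴ *ᵥ v) t‖^2 ≤ μ * ∑ s, ‖v s‖^2 := by
  set u : k → ℂ := Wᴴ *ᵥ v with hu
  set S : ℝ := ∑ t, ‖u t‖^2 with hS
  set T : ℝ := ∑ s, ‖v s‖^2 with hT
  have hS0 : 0 ≤ S := Finset.sum_nonneg fun i _ => sq_nonneg _
  have hT0 : 0 ≤ T := Finset.sum_nonneg fun i _ => sq_nonneg _
  have h1 : star u ⬝ᵥ (Wᴴ *ᵥ v) = star (W *ᵥ u) ⬝ᵥ v := by
    rw [Matrix.dotProduct_mulVec, ← Matrix.star_mulVec]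
  have h1' : star u ⬝ᵥ u = star (W *ᵥ u) ⬝ᵥ v := h1
  have h2 : S ≤ ‖star (W *ᵥ u) ⬝ᵥ v‖ :=
    calc S = (star u ⬝ᵥ u).re := (star_dot_self_re u).symm
      _ = (star (W *ᵥ u) ⬝ᵥ v).re := by rw [h1']
      _ ≤ ‖star (W *ᵥ u) ⬝ᵥ v‖ := Complex.re_le_norm _
  have h4 : ‖star (W *ᵥ u) ⬝ᵥ v‖ ≤ Real.sqrt (μ * S) * Real.sqrt T := by
    refine le_trans (cs_dot _ _) (mul_le_mul_of_nonneg_right ?_ (Real.sqrt_nonneg _))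
    exact Real.sqrt_le_sqrt (hop u)
  have h5 : S ≤ Real.sqrt μ * Real.sqrt S * Real.sqrt T := by
    have h6 := le_trans h2 h4
    rwa [Real.sqrt_mul hμ] at h6
  rcases eq_or_lt_of_le hS0 with h0 | h0
  · rw [← h0]; exact mul_nonneg hμ hT0
  · have hsS : 0 < Real.sqrt S := Real.sqrt_pos.2 h0
    have k2 : Real.sqrt S * Real.sqrt S ≤ (Real.sqrt μ * Real.sqrt T) * Real.sqrt S := by
      rw [Real.mul_self_sqrt hS0]; linarith [h5]
    have k3 : Real.sqrt S ≤ Real.sqrt μ * Real.sqrt T := le_of_mul_le_mul_right k2 hsS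
    calc S = Real.sqrt S * Real.sqrt S := (Real.mul_self_sqrt hS0).symm
      _ ≤ (Real.sqrt μ * Real.sqrt T) * (Real.sqrt μ * Real.sqrt T) :=
          mul_le_mul k3 k3 (Real.sqrt_nonneg S) (mul_nonneg (Real.sqrt_nonneg μ) (Real.sqrt_nonneg T))
      _ = (Real.sqrt μ * Real.sqrt μ) * (Real.sqrt T * Real.sqrt T) := by ring
      _ = μ * T := by rw [Real.mul_self_sqrt hμ, Real.mul_self_sqrt hT0]

open EMaC in
/-- Lemma 8, part 1: under the incoherence property,
`‖U V*‖_{A,∞} ≤ μ1 c_s r/(n1 n2)`, and in fact every entry of `U V*` has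
modulus at most `μ1 c_s r/(n1 n2)`. -/
theorem UV_AnormInf_bound
    (n1 n2 r r' k1 k2 : ℕ) (hn1 : 0 < n1) (hn2 : 0 < n2) (hr : 0 < r)
    (hk1 : 1 ≤ k1) (hk1' : k1 ≤ n1) (hk2 : 1 ≤ k2) (hk2' : k2 ≤ n2)
    (d : Fin r → ℂ) (f1 f2 : Fin r → ℝ)
    (hmodel : SpectralModel r f1 f2)
    (μ1 : ℝ) (hμ1 : 0 < μ1)
    (hinc : Incoherent n1 n2 r k1 k2 f1 f2 μ1)
    (U : Matrix (Fin k1 × Fin k2) (Fin r') ℂ) (σ : Fin r' → ℝ)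
    (V : Matrix (Fin (n1 - k1 + 1) × Fin (n2 - k2 + 1)) (Fin r') ℂ)
    (hsvd : CompactSVD (enhance k1 k2 hk1' hk2' (dataMatrix n1 n2 r d f1 f2)) U σ V) :
    AnormInf n1 n2 k1 k2 (U * Vᴴ) ≤ μ1 * cs n1 n2 k1 k2 * r / ((n1 : ℝ) * n2) ∧
      ∀ (ip : Fin k1 × Fin k2) (jq : Fin (n1 - k1 + 1) × Fin (n2 - k2 + 1)),
        ‖(U * Vᴴ) ip jq‖ ≤ μ1 * cs n1 n2 k1 k2 * r / ((n1 : ℝ) * n2) := by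
  obtain ⟨hUo, hVo, hσ, hdecomp⟩ := hsvd
  have : Nonempty (Fin r) := Fin.pos_iff_nonempty.mp hr
  set L : Matrix (Fin k1 × Fin k2) (Fin r) ℂ := EL r k1 k2 f1 f2 with hLdef
  set R : Matrix (Fin r) (Fin (n1 - k1 + 1) × Fin (n2 - k2 + 1)) ℂ :=
    ER n1 n2 r k1 k2 f1 f2 with hRdef
  set K : ℝ := (k1 : ℝ) * k2 with hKdef
  set N : ℝ := ((n1 - k1 + 1 : ℕ) : ℝ) * ((n2 - k2 + 1 : ℕ) : ℝ) with hNdef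
  set nn : ℝ := (n1 : ℝ) * n2 with hnndef
  have hK0 : (0 : ℝ) < K := by
    rw [hKdef]
    have h1 : (0 : ℝ) < k1 := by exact_mod_cast hk1
    have h2 : (0 : ℝ) < k2 := by exact_mod_cast hk2
    exact mul_pos h1 h2
  have hN0 : (0 : ℝ) < N := by
    rw [hNdef]
    have h1 : (0 : ℝ) < ((n1 - k1 + 1 : ℕ) : ℝ) := by positivity
    have h2 : (0 : ℝ) < ((n2 - k2 + 1 : ℕ) : ℝ) := by positivity
    exact mul_pos h1 h2
  have hnn0 : (0 : ℝ) < nn := by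
    rw [hnndef]
    have h1 : (0 : ℝ) < n1 := by exact_mod_cast hn1
    have h2 : (0 : ℝ) < n2 := by exact_mod_cast hn2
    exact mul_pos h1 h2
  have hsK0 : Real.sqrt K ≠ 0 := ne_of_gt (Real.sqrt_pos.2 hK0)
  have hsN0 : Real.sqrt N ≠ 0 := ne_of_gt (Real.sqrt_pos.2 hN0)
  have hsKC : ((Real.sqrt K : ℝ) : ℂ) ≠ 0 := by exact_mod_cast hsK0
  have hsNC : ((Real.sqrt N : ℝ) : ℂ) ≠ 0 := by exact_mod_cast hsN0
  -- norm of efreq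
  have hef : ∀ f : ℝ, ‖efreq f‖ = 1 := by
    intro f
    rw [efreq, Complex.norm_exp]
    have h1 : (2 * (Real.pi : ℂ) * Complex.I * (f : ℂ)).re = 0 := by
      simp [Complex.mul_re, Complex.mul_im]
    rw [h1, Real.exp_zero]
  -- entry norms
  have hLnorm : ∀ (a : Fin k1 × Fin k2) (s : Fin r), ‖L a s‖ ^ 2 = K⁻¹ := by
    intro a s
    rw [hLdef]
    show ‖efreq (f1 s) ^ (a.1 : ℕ) * efreq (f2 s) ^ (a.2 : ℕ) / ((Real.sqrt K : ℝ) : ℂ)‖ ^ 2 = K⁻¹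
    rw [norm_div, norm_mul, norm_pow, norm_pow, hef, hef, one_pow, one_pow, one_mul,
      Complex.norm_real, Real.norm_eq_abs, abs_of_nonneg (Real.sqrt_nonneg K)]
    rw [div_pow, one_pow, Real.sq_sqrt hK0.le, one_div]
  have hRnorm : ∀ (s : Fin r) (b : Fin (n1 - k1 + 1) × Fin (n2 - k2 + 1)),
      ‖R s b‖ ^ 2 = N⁻¹ := by
    intro s b
    rw [hRdef]
    show ‖efreq (f1 s) ^ (b.1 : ℕ) * efreq (f2 s) ^ (b.2 : ℕ) / ((Real.sqrt N : ℝ) : ℂ)‖ ^ 2 = N⁻¹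
    rw [norm_div, norm_mul, norm_pow, norm_pow, hef, hef, one_pow, one_pow, one_mul,
      Complex.norm_real, Real.norm_eq_abs, abs_of_nonneg (Real.sqrt_nonneg N)]
    rw [div_pow, one_pow, Real.sq_sqrt hN0.le, one_div]
  -- factorization of the enhanced matrix
  set Dm : Matrix (Fin r) (Fin r) ℂ :=
    Matrix.diagonal (fun s => d s * ((Real.sqrt K : ℝ) : ℂ) * ((Real.sqrt N : ℝ) : ℂ)) with hDm
  have hXe : enhance k1 k2 hk1' hk2' (dataMatrix n1 n2 r d f1 f2) = L * Dm * R := by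
    ext ip jq
    show dataMatrix n1 n2 r d f1 f2 ⟨ip.1.1 + jq.1.1, _⟩ ⟨ip.2.1 + jq.2.1, _⟩ = _
    rw [Matrix.mul_apply]
    have hterm : ∀ s : Fin r, (L * Dm) ip s * R s jq =
        d s * efreq (f1 s) ^ (ip.1.1 + jq.1.1) * efreq (f2 s) ^ (ip.2.1 + jq.2.1) := by
      intro s
      rw [Matrix.mul_diagonal, hLdef, hRdef]
      show (efreq (f1 s) ^ (ip.1 : ℕ) * efreq (f2 s) ^ (ip.2 : ℕ) / ((Real.sqrt K : ℝ) : ℂ)) *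
          (d s * ((Real.sqrt K : ℝ) : ℂ) * ((Real.sqrt N : ℝ) : ℂ)) *
          (efreq (f1 s) ^ (jq.1 : ℕ) * efreq (f2 s) ^ (jq.2 : ℕ) / ((Real.sqrt N : ℝ) : ℂ)) = _
      rw [pow_add, pow_add]
      field_simp
    rw [Finset.sum_congr rfl fun s _ => hterm s]
    show ∑ i : Fin r, d i * efreq (f1 i) ^ (ip.1.1 + jq.1.1) * efreq (f2 i) ^ (ip.2.1 + jq.2.1) = _
    rfl
  -- the diagonal of singular values and its inverse
  set Λ : Matrix (Fin r') (Fin r') ℂ :=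
    Matrix.diagonal (fun i => ((σ i : ℝ) : ℂ)) with hΛdef
  set Dinv : Matrix (Fin r') (Fin r') ℂ :=
    Matrix.diagonal (fun i => (((σ i)⁻¹ : ℝ) : ℂ)) with hDinv
  have hΛinv : Λ * Dinv = 1 := by
    have hfun : (fun i : Fin r' => ((σ i : ℝ) : ℂ) * (((σ i)⁻¹ : ℝ) : ℂ)) = fun _ => (1 : ℂ) :=
      funext fun i => by
        rw [← Complex.ofReal_mul, mul_inv_cancel₀ (ne_of_gt (hσ i)), Complex.ofReal_one]
    rw [hΛdef, hDinv, Matrix.diagonal_mul_diagonal, hfun, Matrix.diagonal_one]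
  have hΛH : Λᴴ = Λ := by
    have hfun : (star fun i : Fin r' => ((σ i : ℝ) : ℂ)) = fun i : Fin r' => ((σ i : ℝ) : ℂ) :=
      funext fun i => by simp [Pi.star_apply, Complex.conj_ofReal]
    rw [hΛdef, Matrix.diagonal_conjTranspose, hfun]
  -- U = L * W
  set W : Matrix (Fin r) (Fin r') ℂ := Dm * (R * (V * Dinv)) with hWdef
  have hU : U = L * W := by
    have h0 : enhance k1 k2 hk1' hk2' (dataMatrix n1 n2 r d f1 f2) * V * Dinv = U := by
      rw [hdecomp, Matrix.mul_assoc (U * Λ) Vᴴ V, hVo, Matrix.mul_one,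
        Matrix.mul_assoc U Λ Dinv, hΛinv, Matrix.mul_one]
    rw [← h0, hXe, hWdef]
    simp only [Matrix.mul_assoc]
  -- V = Rᴴ * W₂
  set W₂ : Matrix (Fin r) (Fin r') ℂ := Dmᴴ * (Lᴴ * (U * Dinv)) with hW2def
  have hV : V = Rᴴ * W₂ := by
    have h0 : (enhance k1 k2 hk1' hk2' (dataMatrix n1 n2 r d f1 f2))ᴴ * U * Dinv = V := by
      rw [hdecomp]
      simp only [Matrix.conjTranspose_mul, Matrix.conjTranspose_conjTranspose, hΛH]
      simp only [Matrix.mul_assoc]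
      rw [← Matrix.mul_assoc Uᴴ U Dinv, hUo, Matrix.one_mul, hΛinv, Matrix.mul_one]
    rw [← h0, hXe, hW2def]
    simp only [Matrix.conjTranspose_mul, Matrix.conjTranspose_conjTranspose, Matrix.mul_assoc]
  -- incoherence components
  have hinc' : 1 / μ1 ≤ sigmaMin (Lᴴ * L) ∧ 1 / μ1 ≤ sigmaMin ((R * Rᴴ)ᵀ) := hinc
  have hc : 0 < 1 / μ1 := by positivity
  -- quadratic lower bounds
  have hQL : ∀ y : Fin r → ℂ, (1 / μ1) * ∑ i, ‖y i‖ ^ 2 ≤ ∑ j, ‖(L *ᵥ y) j‖ ^ 2 := by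
    intro y
    have hpsd : ∀ z : Fin r → ℂ, 0 ≤ (star z ⬝ᵥ (Lᴴ * L) *ᵥ z).re := fun z => by
      rw [norm_mulVec_sq]; positivity
    have h1 := sigmaMin_psd_quad (Lᴴ * L) (Matrix.isHermitian_conjTranspose_mul_self L)
      hpsd hc hinc'.1 y
    rwa [norm_mulVec_sq] at h1
  have hQR : ∀ y : Fin r → ℂ, (1 / μ1) * ∑ i, ‖y i‖ ^ 2 ≤ ∑ j, ‖(Rᴴ *ᵥ y) j‖ ^ 2 := by
    intro y
    have hRR : R * Rᴴ = (Rᴴ)ᴴ * Rᴴ := by rw [Matrix.conjTranspose_conjTranspose]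
    have hpsd : ∀ z : Fin r → ℂ, 0 ≤ (star z ⬝ᵥ (R * Rᴴ)ᵀ *ᵥ z).re := fun z => by
      rw [dot_transpose, hRR, norm_mulVec_sq]; positivity
    have h1 := sigmaMin_psd_quad ((R * Rᴴ)ᵀ)
      (Matrix.isHermitian_mul_conjTranspose_self R).transpose hpsd hc hinc'.2 (star y)
    rw [dot_transpose] at h1
    simp only [star_star] at h1
    rw [hRR, norm_mulVec_sq] at h1
    have h2 : ∑ i, ‖(star y) i‖ ^ 2 = ∑ i, ‖y i‖ ^ 2 := by
      exact Finset.sum_congr rfl fun i _ => by rw [Pi.star_apply, norm_star]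
    rwa [h2] at h1
  -- operator bounds for W, W₂
  have hWop : ∀ x : Fin r' → ℂ, ∑ s, ‖(W *ᵥ x) s‖ ^ 2 ≤ μ1 * ∑ t, ‖x t‖ ^ 2 := by
    intro x
    have h1 := hQL (W *ᵥ x)
    have h2 : ∑ j, ‖(L *ᵥ (W *ᵥ x)) j‖ ^ 2 = ∑ t, ‖x t‖ ^ 2 := by
      rw [Matrix.mulVec_mulVec, ← hU, ← norm_mulVec_sq, hUo, Matrix.one_mulVec,
        star_dot_self_re]
    rw [h2] at h1
    have h4 : μ1 * (1 / μ1) = 1 := by field_simp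
    have h5 := mul_le_mul_of_nonneg_left h1 hμ1.le
    rwa [← mul_assoc, h4, one_mul] at h5
  have hW2op : ∀ x : Fin r' → ℂ, ∑ s, ‖(W₂ *ᵥ x) s‖ ^ 2 ≤ μ1 * ∑ t, ‖x t‖ ^ 2 := by
    intro x
    have h1 := hQR (W₂ *ᵥ x)
    have h2 : ∑ j, ‖(Rᴴ *ᵥ (W₂ *ᵥ x)) j‖ ^ 2 = ∑ t, ‖x t‖ ^ 2 := by
      rw [Matrix.mulVec_mulVec, ← hV, ← norm_mulVec_sq, hVo, Matrix.one_mulVec,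
        star_dot_self_re]
    rw [h2] at h1
    have h4 : μ1 * (1 / μ1) = 1 := by field_simp
    have h5 := mul_le_mul_of_nonneg_left h1 hμ1.le
    rwa [← mul_assoc, h4, one_mul] at h5
  have hWadj := adj_bound W μ1 hμ1.le hWop
  have hW2adj := adj_bound W₂ μ1 hμ1.le hW2op
  -- row bounds
  have hrowU : ∀ a : Fin k1 × Fin k2, ∑ t, ‖U a t‖ ^ 2 ≤ μ1 * ((r : ℝ) * K⁻¹) := by
    intro a
    have h1 : ∀ t, U a t = star ((Wᴴ *ᵥ star (L a)) t) := by
      intro t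
      rw [hU]
      simp only [Matrix.mul_apply, Matrix.mulVec, Matrix.conjTranspose_apply, dotProduct,
        Pi.star_apply, star_sum, star_mul', star_star]
      exact Finset.sum_congr rfl fun s _ => mul_comm _ _
    calc ∑ t, ‖U a t‖ ^ 2 = ∑ t, ‖(Wᴴ *ᵥ star (L a)) t‖ ^ 2 :=
          Finset.sum_congr rfl fun t _ => by rw [h1 t, norm_star]
      _ ≤ μ1 * ∑ s, ‖(star (L a)) s‖ ^ 2 := hWadj (star (L a))
      _ = μ1 * ((r : ℝ) * K⁻¹) := by
          congr 1
          calc ∑ s, ‖(star (L a)) s‖ ^ 2 = ∑ s : Fin r, K⁻¹ :=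
                Finset.sum_congr rfl fun s _ => by
                  rw [Pi.star_apply, norm_star, hLnorm a s]
            _ = (r : ℝ) * K⁻¹ := by
                rw [Finset.sum_const, Finset.card_univ, Fintype.card_fin, nsmul_eq_mul]
  have hrowV : ∀ b : Fin (n1 - k1 + 1) × Fin (n2 - k2 + 1),
      ∑ t, ‖V b t‖ ^ 2 ≤ μ1 * ((r : ℝ) * N⁻¹) := by
    intro b
    have h1 : ∀ t, V b t = star ((W₂ᴴ *ᵥ (fun s => R s b)) t) := by
      intro t
      rw [hV]
      simp only [Matrix.mul_apply, Matrix.mulVec, Matrix.conjTranspose_apply, dotProduct,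
        Pi.star_apply, star_sum, star_mul', star_star]
      exact Finset.sum_congr rfl fun s _ => mul_comm _ _
    calc ∑ t, ‖V b t‖ ^ 2 = ∑ t, ‖(W₂ᴴ *ᵥ (fun s => R s b)) t‖ ^ 2 :=
          Finset.sum_congr rfl fun t _ => by rw [h1 t, norm_star]
      _ ≤ μ1 * ∑ s, ‖R s b‖ ^ 2 := hW2adj (fun s => R s b)
      _ = μ1 * ((r : ℝ) * N⁻¹) := by
          congr 1
          calc ∑ s, ‖R s b‖ ^ 2 = ∑ s : Fin r, N⁻¹ :=
                Finset.sum_congr rfl fun s _ => hRnorm s b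
            _ = (r : ℝ) * N⁻¹ := by
                rw [Finset.sum_const, Finset.card_univ, Fintype.card_fin, nsmul_eq_mul]
  -- the target bound
  set M : ℝ := μ1 * cs n1 n2 k1 k2 * r / nn with hMdef
  have hcs0 : 0 ≤ cs n1 n2 k1 k2 := le_trans (by positivity) (le_max_left _ _)
  have hM0 : 0 ≤ M := by rw [hMdef]; positivity
  have hKM : μ1 * ((r : ℝ) * K⁻¹) ≤ M := by
    have h1 : μ1 * (nn / K) * r / nn = μ1 * ((r : ℝ) * K⁻¹) := by
      field_simp
    rw [hMdef, ← h1]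
    have h2 : nn / K ≤ cs n1 n2 k1 k2 := le_max_left _ _
    gcongr
  have hNM : μ1 * ((r : ℝ) * N⁻¹) ≤ M := by
    have h1 : μ1 * (nn / N) * r / nn = μ1 * ((r : ℝ) * N⁻¹) := by
      field_simp
    rw [hMdef, ← h1]
    have h2 : nn / N ≤ cs n1 n2 k1 k2 := le_max_right _ _
    gcongr
  -- entrywise bound
  have hentry : ∀ (a : Fin k1 × Fin k2) (b : Fin (n1 - k1 + 1) × Fin (n2 - k2 + 1)),
      ‖(U * Vᴴ) a b‖ ≤ M := by
    intro a b
    have h1 : (U * Vᴴ) a b = star (fun t => star (U a t)) ⬝ᵥ (fun t => star (V b t)) := by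
      simp only [Matrix.mul_apply, Matrix.conjTranspose_apply, dotProduct,
        Pi.star_apply, star_star]
    rw [h1]
    refine le_trans (cs_dot _ _) ?_
    have e1 : ∑ t, ‖(fun t => star (U a t)) t‖ ^ 2 = ∑ t, ‖U a t‖ ^ 2 :=
      Finset.sum_congr rfl fun t _ => by rw [norm_star]
    have e2 : ∑ t, ‖(fun t => star (V b t)) t‖ ^ 2 = ∑ t, ‖V b t‖ ^ 2 :=
      Finset.sum_congr rfl fun t _ => by rw [norm_star]
    rw [e1, e2]
    calc Real.sqrt (∑ t, ‖U a t‖ ^ 2) * Real.sqrt (∑ t, ‖V b t‖ ^ 2)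
        ≤ Real.sqrt M * Real.sqrt M :=
          mul_le_mul (Real.sqrt_le_sqrt (le_trans (hrowU a) hKM))
            (Real.sqrt_le_sqrt (le_trans (hrowV b) hNM)) (Real.sqrt_nonneg _)
            (Real.sqrt_nonneg _)
      _ = M := Real.mul_self_sqrt hM0
  refine ⟨?_, hentry⟩
  -- the A-infinity norm bound
  refine Real.iSup_le (fun a => ?_) hM0
  set ω : ℕ := wcount n1 n2 k1 k2 a with hω
  have hA1 : ∀ (ip : Fin k1 × Fin k2) (jq : Fin (n1 - k1 + 1) × Fin (n2 - k2 + 1)),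
      ‖Amat n1 n2 k1 k2 a ip jq‖ =
        if ((ip.1 : ℕ) + (jq.1 : ℕ) = (a.1 : ℕ) ∧ (ip.2 : ℕ) + (jq.2 : ℕ) = (a.2 : ℕ)) then
          (Real.sqrt ω)⁻¹ else 0 := by
    intro ip jq
    show ‖(if ((ip.1 : ℕ) + (jq.1 : ℕ) = (a.1 : ℕ) ∧ (ip.2 : ℕ) + (jq.2 : ℕ) = (a.2 : ℕ)) then
        ((((Real.sqrt (wcount n1 n2 k1 k2 a))⁻¹ : ℝ)) : ℂ) else 0)‖ = _
    split_ifs with h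
    · rw [Complex.norm_real, Real.norm_eq_abs,
        abs_of_nonneg (inv_nonneg.2 (Real.sqrt_nonneg _))]
    · rw [norm_zero]
  have hAs : ∑ ip : Fin k1 × Fin k2, ∑ jq : Fin (n1 - k1 + 1) × Fin (n2 - k2 + 1),
      ‖Amat n1 n2 k1 k2 a ip jq‖ = Real.sqrt ω := by
    rw [Finset.sum_congr rfl fun ip _ => Finset.sum_congr rfl fun jq _ => hA1 ip jq]
    have hps : (∑ e : (Fin k1 × Fin k2) × (Fin (n1 - k1 + 1) × Fin (n2 - k2 + 1)),
        (if ((e.1.1 : ℕ) + (e.2.1 : ℕ) = (a.1 : ℕ) ∧ (e.1.2 : ℕ) + (e.2.2 : ℕ) = (a.2 : ℕ))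
          then (Real.sqrt ω)⁻¹ else 0))
        = ∑ ip : Fin k1 × Fin k2, ∑ jq : Fin (n1 - k1 + 1) × Fin (n2 - k2 + 1),
          (if ((ip.1 : ℕ) + (jq.1 : ℕ) = (a.1 : ℕ) ∧ (ip.2 : ℕ) + (jq.2 : ℕ) = (a.2 : ℕ))
            then (Real.sqrt ω)⁻¹ else 0) := Fintype.sum_prod_type _
    rw [← hps]
    rw [← Finset.sum_filter]
    rw [Finset.sum_const, nsmul_eq_mul]
    have hcard : (Finset.univ.filter fun e :
        (Fin k1 × Fin k2) × (Fin (n1 - k1 + 1) × Fin (n2 - k2 + 1)) =>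
        (e.1.1 : ℕ) + (e.2.1 : ℕ) = (a.1 : ℕ) ∧ (e.1.2 : ℕ) + (e.2.2 : ℕ) = (a.2 : ℕ)).card
        = ω := by
      rw [hω, wcount]
    rw [hcard]
    rcases Nat.eq_zero_or_pos ω with h0 | h0
    · rw [h0]; simp
    · have hω0 : (0 : ℝ) < (ω : ℝ) := by exact_mod_cast h0
      have hsω : Real.sqrt (ω : ℝ) ≠ 0 := ne_of_gt (Real.sqrt_pos.2 hω0)
      field_simp
      exact (Real.sq_sqrt hω0.le).symm
  have h2 : ‖finner (Amat n1 n2 k1 k2 a) (U * Vᴴ)‖ ≤ Real.sqrt ω * M := by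
    calc ‖finner (Amat n1 n2 k1 k2 a) (U * Vᴴ)‖
        ≤ ∑ ip, ∑ jq, ‖(starRingEnd ℂ) (Amat n1 n2 k1 k2 a ip jq) * (U * Vᴴ) ip jq‖ :=
          le_trans (norm_sum_le _ _) (Finset.sum_le_sum fun ip _ => norm_sum_le _ _)
      _ ≤ ∑ ip, ∑ jq, ‖Amat n1 n2 k1 k2 a ip jq‖ * M := by
          refine Finset.sum_le_sum fun ip _ => Finset.sum_le_sum fun jq _ => ?_
          rw [norm_mul, RCLike.norm_conj]
          exact mul_le_mul_of_nonneg_left (hentry ip jq) (norm_nonneg _)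
      _ = (∑ ip, ∑ jq, ‖Amat n1 n2 k1 k2 a ip jq‖) * M := by
          rw [Finset.sum_mul]
          exact Finset.sum_congr rfl fun ip _ => by rw [Finset.sum_mul]
      _ = Real.sqrt ω * M := by rw [hAs]
  rcases Nat.eq_zero_or_pos ω with h0 | h0
  · have hz : Real.sqrt ((ω : ℕ) : ℝ) = 0 := by rw [h0]; simp
    rw [hz, div_zero]
    exact hM0
  · have hω0 : (0 : ℝ) < (ω : ℝ) := by exact_mod_cast h0
    have hs : 0 < Real.sqrt (ω : ℝ) := Real.sqrt_pos.2 hω0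
    rw [div_le_iff₀ hs]
    linarith [h2]
end
end
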